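/- arXiv:2308.15442 — 7 statements merged into one kernel-verified Lean document; each statement's English description precedes it below -/
import Mathlib

section
/- Let H₀ and H₁ be N×N Hermitian positive-semidefinite complex matrices, let ψ₀ ∈ ℂ^N be a unit vector with H₀ψ₀ = 0 (a ground state of H₀ with zero ground-state energy), let p ≥ 1, let β, γ : Fin p → ℝ, and let ψ_p be the QAOA state after p rounds. Then (Σ_{j=1}^{p} (|β_j| + |γ_j|)) · ‖H₁H₀ − H₀H₁‖ ≥ ⟨ψ_p, H₀ψ_p⟩ + ⟨ψ₀, H₁ψ₀⟩ − ⟨ψ_p, H₁ψ_p⟩. -/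
set_option maxHeartbeats 1000000

open Matrix Complex
open scoped ComplexOrder

/-- The spectral norm (ℓ²→ℓ² operator norm) of a matrix. -/
noncomputable def specNorm {ι : Type*} [Fintype ι] [DecidableEq ι] {𝕜 : Type*} [RCLike 𝕜]
    (M : Matrix ι ι 𝕜) : ℝ :=
  ‖Matrix.toEuclideanCLM (𝕜 := 𝕜) M‖

/-- The QAOA state after `p` rounds:
`ψ_p = exp(-i β_p H₀) exp(-i γ_p H₁) ⋯ exp(-i β_1 H₀) exp(-i γ_1 H₁) ψ₀`. -/
noncomputable def qaoaState {ι : Type*} [Fintype ι] [DecidableEq ι]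
    (H0 H1 : Matrix ι ι ℂ) (p : ℕ) (β γ : Fin p → ℝ) (ψ0 : ι → ℂ) : ι → ℂ :=
  (List.ofFn (fun j : Fin p =>
      NormedSpace.exp ((-(β j.rev : ℂ) * Complex.I) • H0) *
      NormedSpace.exp ((-(γ j.rev : ℂ) * Complex.I) • H1))).prod.mulVec ψ0

section QaoaAux

open scoped Matrix.Norms.L2Operator

variable {N : ℕ}

private lemma exp_skew_mem_unitary (c : Matrix (Fin N) (Fin N) ℂ) (hc : cᴴ = -c) :
    NormedSpace.exp c ∈ unitary (Matrix (Fin N) (Fin N) ℂ) := by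
  have h1 : star (NormedSpace.exp c) = NormedSpace.exp (-c) := by
    rw [Matrix.star_eq_conjTranspose, ← Matrix.exp_conjTranspose, hc]
  have h2 : NormedSpace.exp (-c) * NormedSpace.exp c = 1 := by
    rw [← Matrix.exp_add_of_commute (-c) c (Commute.refl c).neg_left,
      neg_add_cancel, NormedSpace.exp_zero]
  have h3 : NormedSpace.exp c * NormedSpace.exp (-c) = 1 := by
    rw [← Matrix.exp_add_of_commute c (-c) (Commute.refl c).neg_right,
      add_neg_cancel, NormedSpace.exp_zero]
  exact Unitary.mem_iff.mpr ⟨by rw [h1, h2], by rw [h1, h3]⟩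

private lemma neg_mul_I_smul_skew (h : Matrix (Fin N) (Fin N) ℂ) (hh : hᴴ = h) (t : ℝ) :
    ((-(t : ℂ) * Complex.I) • h)ᴴ = -((-(t : ℂ) * Complex.I) • h) := by
  rw [Matrix.conjTranspose_smul, hh, ← neg_smul]
  congr 1
  simp [Complex.ext_iff]

private lemma exp_unit (h : Matrix (Fin N) (Fin N) ℂ) (hh : hᴴ = h) (t : ℝ) :
    NormedSpace.exp ((-(t : ℂ) * Complex.I) • h) ∈ unitary (Matrix (Fin N) (Fin N) ℂ) :=
  exp_skew_mem_unitary _ (neg_mul_I_smul_skew h hh t)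

private lemma conj_exp_sub_norm_le [Nonempty (Fin N)] (h b : Matrix (Fin N) (Fin N) ℂ)
    (hh : hᴴ = h) (t : ℝ) :
    ‖star (NormedSpace.exp ((-(t : ℂ) * Complex.I) • h)) * b *
        NormedSpace.exp ((-(t : ℂ) * Complex.I) • h) - b‖ ≤ |t| * ‖h * b - b * h‖ := by
  set c : Matrix (Fin N) (Fin N) ℂ := Complex.I • h with hcdef
  have hcskew : cᴴ = -c := by
    rw [hcdef, Matrix.conjTranspose_smul, hh, Complex.star_def, Complex.conj_I, neg_smul]
  have hnegcskew : (-c)ᴴ = -(-c) := by rw [Matrix.conjTranspose_neg, hcskew]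
  have hskew : ∀ (s : ℝ) (d : Matrix (Fin N) (Fin N) ℂ), dᴴ = -d →
      ((s : ℂ) • d)ᴴ = -((s : ℂ) • d) := fun s d hd => by
    rw [Matrix.conjTranspose_smul, hd, Complex.star_def, Complex.conj_ofReal, smul_neg]
  have hnorm1 : ∀ s : ℝ, ‖NormedSpace.exp ((s : ℂ) • c)‖ = 1 := fun s =>
    CStarRing.norm_of_mem_unitary (exp_skew_mem_unitary _ (hskew s c hcskew))
  have hnorm2 : ∀ s : ℝ, ‖NormedSpace.exp ((s : ℂ) • (-c))‖ = 1 := fun s =>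
    CStarRing.norm_of_mem_unitary (exp_skew_mem_unitary _ (hskew s (-c) hnegcskew))
  set g : ℝ → Matrix (Fin N) (Fin N) ℂ := fun s =>
    NormedSpace.exp ((s : ℂ) • c) * b * NormedSpace.exp ((s : ℂ) • (-c)) with hgdef
  have hderiv : ∀ s : ℝ, HasDerivAt g
      (NormedSpace.exp ((s : ℂ) • c) * (c * b - b * c) *
        NormedSpace.exp ((s : ℂ) • (-c))) s := by
    intro s
    have d1 : HasDerivAt (fun y : ℝ => NormedSpace.exp ((y : ℂ) • c))
        (NormedSpace.exp ((s : ℂ) • c) * c) s :=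
      by have := HasDerivAt.scomp (𝕜 := ℝ) s (hasDerivAt_exp_smul_const c (s : ℂ))
            Complex.ofRealCLM.hasDerivAt
         simp only [Complex.ofRealCLM_apply, Complex.ofReal_one, one_smul] at this
         exact this
    have d2 : HasDerivAt (fun y : ℝ => NormedSpace.exp ((y : ℂ) • (-c)))
        (NormedSpace.exp ((s : ℂ) • (-c)) * (-c)) s :=
      by have := HasDerivAt.scomp (𝕜 := ℝ) s (hasDerivAt_exp_smul_const (-c) (s : ℂ))
            Complex.ofRealCLM.hasDerivAt
         simp only [Complex.ofRealCLM_apply, Complex.ofReal_one, one_smul] at this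
         exact this
    have hmul := (d1.mul_const b).mul d2
    refine hmul.congr_deriv ?_
    have hcomm : NormedSpace.exp ((s : ℂ) • (-c)) * c =
        c * NormedSpace.exp ((s : ℂ) • (-c)) :=
      (((Commute.refl c).neg_left.smul_left ((s : ℂ))).exp_left).eq
    rw [mul_neg, hcomm]
    noncomm_ring
  have hbound : ∀ s : ℝ, ‖NormedSpace.exp ((s : ℂ) • c) * (c * b - b * c) *
      NormedSpace.exp ((s : ℂ) • (-c))‖ ≤ ‖h * b - b * h‖ := by
    intro s
    have hX : c * b - b * c = Complex.I • (h * b - b * h) := by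
      rw [hcdef, smul_sub, Matrix.smul_mul, Matrix.mul_smul]
    calc ‖NormedSpace.exp ((s : ℂ) • c) * (c * b - b * c) *
          NormedSpace.exp ((s : ℂ) • (-c))‖
        ≤ ‖NormedSpace.exp ((s : ℂ) • c) * (c * b - b * c)‖ *
          ‖NormedSpace.exp ((s : ℂ) • (-c))‖ := norm_mul_le _ _
      _ ≤ ‖NormedSpace.exp ((s : ℂ) • c)‖ * ‖c * b - b * c‖ *
          ‖NormedSpace.exp ((s : ℂ) • (-c))‖ :=
          mul_le_mul_of_nonneg_right (norm_mul_le _ _) (norm_nonneg _)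
      _ = ‖c * b - b * c‖ := by rw [hnorm1 s, hnorm2 s, one_mul, mul_one]
      _ = ‖h * b - b * h‖ := by rw [hX, norm_smul]; simp
  have hMVT := Convex.norm_image_sub_le_of_norm_hasDerivWithin_le
    (f := g) (f' := fun s => NormedSpace.exp ((s : ℂ) • c) * (c * b - b * c) *
      NormedSpace.exp ((s : ℂ) • (-c))) (s := Set.univ)
    (fun s _ => (hderiv s).hasDerivWithinAt) (fun s _ => hbound s) convex_univ
    (Set.mem_univ 0) (Set.mem_univ t)
  have hE : NormedSpace.exp ((-(t : ℂ) * Complex.I) • h) =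
      NormedSpace.exp ((t : ℂ) • (-c)) := by
    rw [hcdef, smul_neg, ← neg_smul, smul_smul]
  have hEstar : star (NormedSpace.exp ((-(t : ℂ) * Complex.I) • h)) =
      NormedSpace.exp ((t : ℂ) • c) := by
    rw [hE, Matrix.star_eq_conjTranspose, ← Matrix.exp_conjTranspose,
      hskew t (-c) hnegcskew, smul_neg, neg_neg]
  have hg0 : g 0 = b := by
    simp [hgdef, NormedSpace.exp_zero]
  have hgt : g t = star (NormedSpace.exp ((-(t : ℂ) * Complex.I) • h)) * b *
      NormedSpace.exp ((-(t : ℂ) * Complex.I) • h) := by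
    rw [hEstar, hE]
  calc ‖star (NormedSpace.exp ((-(t : ℂ) * Complex.I) • h)) * b *
        NormedSpace.exp ((-(t : ℂ) * Complex.I) • h) - b‖
      = ‖g t - g 0‖ := by rw [hgt, hg0]
    _ ≤ ‖h * b - b * h‖ * ‖t - (0 : ℝ)‖ := hMVT
    _ = |t| * ‖h * b - b * h‖ := by rw [sub_zero, Real.norm_eq_abs, mul_comm]

private lemma conj_pair_bound [Nonempty (Fin N)] (A e0 e1 : Matrix (Fin N) (Fin N) ℂ)
    (h1 : e1 ∈ unitary (Matrix (Fin N) (Fin N) ℂ)) {b0 b1 : ℝ}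
    (hb0 : ‖star e0 * A * e0 - A‖ ≤ b0) (hb1 : ‖star e1 * A * e1 - A‖ ≤ b1) :
    ‖star (e0 * e1) * A * (e0 * e1) - A‖ ≤ b0 + b1 := by
  have key : star (e0 * e1) * A * (e0 * e1) - A
      = star e1 * (star e0 * A * e0 - A) * e1 + (star e1 * A * e1 - A) := by
    rw [Matrix.star_mul]
    noncomm_ring
  rw [key]
  refine (norm_add_le _ _).trans (add_le_add ?_ hb1)
  rw [mul_assoc, CStarRing.norm_mem_unitary_mul _ (Unitary.star_mem h1),
    CStarRing.norm_mul_mem_unitary _ h1]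
  exact hb0

private lemma telescope [Nonempty (Fin N)] (A : Matrix (Fin N) (Fin N) ℂ) :
    ∀ L : List (Matrix (Fin N) (Fin N) ℂ),
      (∀ u ∈ L, u ∈ unitary (Matrix (Fin N) (Fin N) ℂ)) →
      ‖star L.prod * A * L.prod - A‖ ≤ (L.map fun u => ‖star u * A * u - A‖).sum
  | [], _ => by simp
  | u :: L, hL => by
      have hu : u ∈ unitary (Matrix (Fin N) (Fin N) ℂ) := hL u List.mem_cons_self
      have hLmem : ∀ v ∈ L, v ∈ unitary (Matrix (Fin N) (Fin N) ℂ) := fun v hv =>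
        hL v (List.mem_cons_of_mem u hv)
      have hV : L.prod ∈ unitary (Matrix (Fin N) (Fin N) ℂ) :=
        Submonoid.list_prod_mem _ hLmem
      rw [List.prod_cons, List.map_cons, List.sum_cons]
      exact conj_pair_bound A u L.prod hV le_rfl (telescope A L hLmem)

/-- lower bound on the sum of QAOA angles. -/
theorem qaoa_angle_sum_lower_bound
    {N : ℕ} (hN : 1 ≤ N) (H0 H1 : Matrix (Fin N) (Fin N) ℂ)
    (hH0 : H0.PosSemidef) (hH1 : H1.PosSemidef)
    (ψ0 : Fin N → ℂ) (hψ0 : star ψ0 ⬝ᵥ ψ0 = 1) (hground : H0 *ᵥ ψ0 = 0)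
    (p : ℕ) (hp : 1 ≤ p) (β γ : Fin p → ℝ)
    (ψp : Fin N → ℂ) (hψp : ψp = qaoaState H0 H1 p β γ ψ0) :
    (∑ j, (|β j| + |γ j|)) * specNorm (H1 * H0 - H0 * H1) ≥
      (star ψp ⬝ᵥ (H0 *ᵥ ψp)).re + (star ψ0 ⬝ᵥ (H1 *ᵥ ψ0)).re
        - (star ψp ⬝ᵥ (H1 *ᵥ ψp)).re := by
  haveI : Nonempty (Fin N) := ⟨⟨0, by omega⟩⟩
  let A : Matrix (Fin N) (Fin N) ℂ := H0 - H1
  let C : Matrix (Fin N) (Fin N) ℂ := H1 * H0 - H0 * H1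
  let f : Fin p → Matrix (Fin N) (Fin N) ℂ := fun j =>
    NormedSpace.exp ((-(β j.rev : ℂ) * Complex.I) • H0) *
    NormedSpace.exp ((-(γ j.rev : ℂ) * Complex.I) • H1)
  let L : List (Matrix (Fin N) (Fin N) ℂ) := List.ofFn f
  let U : Matrix (Fin N) (Fin N) ℂ := L.prod
  have hψpU : ψp = U *ᵥ ψ0 := hψp
  have hmem : ∀ u ∈ L, u ∈ unitary (Matrix (Fin N) (Fin N) ℂ) := by
    intro u hu
    rw [List.mem_ofFn] at hu
    obtain ⟨j, rfl⟩ := hu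
    exact mul_mem (exp_unit H0 hH0.isHermitian _) (exp_unit H1 hH1.isHermitian _)
  have hC0 : H0 * A - A * H0 = C := by show H0 * (H0 - H1) - (H0 - H1) * H0 = H1 * H0 - H0 * H1; noncomm_ring
  have hC1 : H1 * A - A * H1 = C := by show H1 * (H0 - H1) - (H0 - H1) * H1 = H1 * H0 - H0 * H1; noncomm_ring
  have hjb : ∀ j : Fin p, ‖star (f j) * A * f j - A‖ ≤ (|β j.rev| + |γ j.rev|) * ‖C‖ := by
    intro j
    have hb0 : ‖star (NormedSpace.exp ((-(β j.rev : ℂ) * Complex.I) • H0)) * A *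
        NormedSpace.exp ((-(β j.rev : ℂ) * Complex.I) • H0) - A‖ ≤ |β j.rev| * ‖C‖ := by
      have := conj_exp_sub_norm_le H0 A hH0.isHermitian (β j.rev)
      rwa [hC0] at this
    have hb1 : ‖star (NormedSpace.exp ((-(γ j.rev : ℂ) * Complex.I) • H1)) * A *
        NormedSpace.exp ((-(γ j.rev : ℂ) * Complex.I) • H1) - A‖ ≤ |γ j.rev| * ‖C‖ := by
      have := conj_exp_sub_norm_le H1 A hH1.isHermitian (γ j.rev)
      rwa [hC1] at this
    have := conj_pair_bound A _ _ (exp_unit H1 hH1.isHermitian (γ j.rev)) hb0 hb1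
    calc ‖star (f j) * A * f j - A‖ ≤ |β j.rev| * ‖C‖ + |γ j.rev| * ‖C‖ := this
      _ = (|β j.rev| + |γ j.rev|) * ‖C‖ := by ring
  have hUbound : ‖star U * A * U - A‖ ≤ (∑ j, (|β j| + |γ j|)) * ‖C‖ := by
    refine (telescope A L hmem).trans ?_
    have : (L.map fun u => ‖star u * A * u - A‖).sum
        = ∑ j : Fin p, ‖star (f j) * A * f j - A‖ := by
      rw [List.map_ofFn, List.sum_ofFn]
      rfl
    rw [this]
    calc ∑ j : Fin p, ‖star (f j) * A * f j - A‖
        ≤ ∑ j : Fin p, (|β j.rev| + |γ j.rev|) * ‖C‖ :=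
          Finset.sum_le_sum fun j _ => hjb j
      _ = ∑ j : Fin p, (|β j| + |γ j|) * ‖C‖ :=
          Fintype.sum_equiv Fin.revPerm _ _ (fun j => rfl)
      _ = (∑ j, (|β j| + |γ j|)) * ‖C‖ := (Finset.sum_mul _ _ _).symm
  have key : ∀ M : Matrix (Fin N) (Fin N) ℂ,
      star (U *ᵥ ψ0) ⬝ᵥ (M *ᵥ (U *ᵥ ψ0)) = star ψ0 ⬝ᵥ ((star U * M * U) *ᵥ ψ0) := by
    intro M
    rw [Matrix.star_mulVec, Matrix.mulVec_mulVec, ← Matrix.dotProduct_mulVec,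
      Matrix.mulVec_mulVec, Matrix.star_eq_conjTranspose, ← Matrix.mul_assoc]
  have hDsplit : star U * A * U - A = (star U * H0 * U - star U * H1 * U) - (H0 - H1) := by
    show star U * (H0 - H1) * U - (H0 - H1) = _
    noncomm_ring
  have hre : (star ψp ⬝ᵥ (H0 *ᵥ ψp)).re + (star ψ0 ⬝ᵥ (H1 *ᵥ ψ0)).re
      - (star ψp ⬝ᵥ (H1 *ᵥ ψp)).re = (star ψ0 ⬝ᵥ ((star U * A * U - A) *ᵥ ψ0)).re := by
    rw [hψpU, key H0, key H1, hDsplit]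
    simp only [Matrix.sub_mulVec, dotProduct_sub, Complex.sub_re]
    rw [hground]
    simp only [dotProduct_zero, Complex.zero_re]
    ring
  set D : Matrix (Fin N) (Fin N) ℂ := star U * A * U - A with hDdef
  set x0 : EuclideanSpace ℂ (Fin N) := (WithLp.equiv 2 _).symm ψ0 with hx0
  have hx0norm : ‖x0‖ = 1 := by
    have h1 : (inner ℂ x0 x0 : ℂ) = 1 := by
      rw [← hψ0, dotProduct_comm]; rfl
    rw [@norm_eq_sqrt_re_inner ℂ, h1]
    simp
  have hDexp : (star ψ0 ⬝ᵥ (D *ᵥ ψ0)).re ≤ ‖D‖ := by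
    have h1 : star ψ0 ⬝ᵥ (D *ᵥ ψ0) =
        (inner ℂ x0 ((WithLp.equiv 2 _).symm (D *ᵥ ψ0)) : ℂ) := by
      rw [dotProduct_comm]; rfl
    have h2 : ‖(inner ℂ x0 ((WithLp.equiv 2 _).symm (D *ᵥ ψ0)) : ℂ)‖
        ≤ ‖x0‖ * ‖((WithLp.equiv 2 (Fin N → ℂ)).symm (D *ᵥ ψ0) : EuclideanSpace ℂ (Fin N))‖ :=
      norm_inner_le_norm _ _
    have h3 : ‖((WithLp.equiv 2 (Fin N → ℂ)).symm (D *ᵥ ψ0) : EuclideanSpace ℂ (Fin N))‖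
        ≤ ‖D‖ * ‖x0‖ := Matrix.l2_opNorm_mulVec D x0
    calc (star ψ0 ⬝ᵥ (D *ᵥ ψ0)).re
        ≤ ‖star ψ0 ⬝ᵥ (D *ᵥ ψ0)‖ := Complex.re_le_norm _
      _ = ‖(inner ℂ x0 ((WithLp.equiv 2 _).symm (D *ᵥ ψ0)) : ℂ)‖ := by rw [h1]
      _ ≤ ‖x0‖ * ‖((WithLp.equiv 2 (Fin N → ℂ)).symm (D *ᵥ ψ0) : EuclideanSpace ℂ (Fin N))‖ := h2
      _ ≤ ‖x0‖ * (‖D‖ * ‖x0‖) := mul_le_mul_of_nonneg_left h3 (norm_nonneg _)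
      _ = ‖D‖ := by rw [hx0norm]; ring
  have hspec : specNorm (H1 * H0 - H0 * H1) = ‖C‖ := rfl
  rw [ge_iff_le, hspec, hre]
  exact hDexp.trans hUbound

end QaoaAux
end

section
/- Let N ≥ 1, let C : Fin N → ℝ, let H_C be the N×N diagonal matrix with diagonal entries C(i), and let P be the N×N matrix all of whose entries equal 1/N (the orthogonal projector onto the uniform vector). Then ‖H_C P − P H_C‖ = σ_C, where σ_C = √((1/N) Σ_i C(i)² − ((1/N) Σ_i C(i))²) is the population standard deviation of the values C(i). -/
open Matrix

-- key algebraic inequality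
lemma key_ineq {N : ℕ} (hN : 0 < N) (d x : Fin N → ℝ) (hd : ∑ i, d i = 0) :
    (∑ i, x i)^2 * (∑ i, d i ^2) + N * (∑ i, d i * x i)^2 ≤
      (N : ℝ) * (∑ i, d i ^2) * (∑ i, x i ^2) := by
  set S := ∑ i, d i ^2 with hS
  set X := ∑ i, x i with hX
  set D := ∑ i, d i * x i with hD
  have hSnn : 0 ≤ S := Finset.sum_nonneg fun i _ => sq_nonneg _
  rcases eq_or_lt_of_le hSnn with h0 | hSpos
  · -- S = 0, so all d i = 0, D = 0
    have hdz : ∀ i ∈ Finset.univ, d i = 0 := by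
      intro i hi
      have := (Finset.sum_eq_zero_iff_of_nonneg (fun i _ => sq_nonneg (d i))).mp h0.symm i hi
      exact pow_eq_zero_iff (n := 2) (by norm_num) |>.mp this
    have hD0 : D = 0 := by
      rw [hD]; exact Finset.sum_eq_zero fun i hi => by rw [hdz i hi, zero_mul]
    rw [← h0, hD0]; ring_nf; positivity
  · have hexp : ∑ i, ((N:ℝ)*S*x i - S*X - N*D*d i)^2 =
        (N:ℝ)*S*((N:ℝ)*S*(∑ i, x i ^2) - S*X^2 - N*D^2) := by
      have : ∀ i ∈ Finset.univ, ((N:ℝ)*S*x i - S*X - N*D*d i)^2 =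
          ((N:ℝ)^2*S^2) * x i^2 + ((N:ℝ)^2*D^2) * d i^2
          - (2*(N:ℝ)^2*S*D) * (d i * x i) - (2*(N:ℝ)*S^2*X) * x i
          + (2*(N:ℝ)*S*D*X) * d i + S^2*X^2 := by
        intro i _; ring
      rw [Finset.sum_congr rfl this]
      simp only [Finset.sum_add_distrib, Finset.sum_sub_distrib, ← Finset.mul_sum,
        Finset.sum_const, Finset.card_fin, nsmul_eq_mul]
      rw [← hS, ← hX, ← hD, hd]
      ring
    have hnn : 0 ≤ ∑ i, ((N:ℝ)*S*x i - S*X - N*D*d i)^2 :=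
      Finset.sum_nonneg fun i _ => sq_nonneg _
    rw [hexp] at hnn
    have hNS : 0 < (N:ℝ)*S := by positivity
    nlinarith [hnn, hNS]

/-- the spectral norm of the commutator of a diagonal cost matrix with the
projector onto the uniform vector equals the population standard deviation of the costs. -/
theorem specNorm_commutator_diagonal_uniformProj
    {N : ℕ} (hN : 1 ≤ N) (C : Fin N → ℝ)
    (HC P : Matrix (Fin N) (Fin N) ℝ)
    (hHC : HC = Matrix.diagonal C)
    (hP : P = Matrix.of fun _ _ => (1 : ℝ) / N) :
    specNorm (HC * P - P * HC) =
      Real.sqrt ((∑ i, C i ^ 2) / N - ((∑ i, C i) / N) ^ 2) := by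
  subst hHC hP
  have hN0 : (0:ℝ) < N := by exact_mod_cast Nat.lt_of_lt_of_le Nat.zero_lt_one hN
  set μ : ℝ := (∑ i, C i) / N with hμ
  set d : Fin N → ℝ := fun i => C i - μ with hdd
  set S : ℝ := ∑ i, d i ^ 2 with hS
  have hsumC : ∑ i, C i = N * μ := by rw [hμ]; field_simp
  have hd0 : ∑ i, d i = 0 := by
    simp only [hdd, Finset.sum_sub_distrib, Finset.sum_const, Finset.card_fin, nsmul_eq_mul,
      hsumC, sub_self]
  have hSnn : 0 ≤ S := Finset.sum_nonneg fun i _ => sq_nonneg _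
  -- RHS = sqrt (S / N)
  have hRHS : (∑ i, C i ^ 2) / N - ((∑ i, C i) / N) ^ 2 = S / N := by
    have : S = ∑ i, C i ^ 2 - N * μ^2 := by
      have : ∀ i ∈ Finset.univ, d i ^ 2 = C i ^2 - (2*μ) * C i + μ^2 := by
        intro i _; rw [hdd]; ring
      rw [hS, Finset.sum_congr rfl this]
      simp only [Finset.sum_add_distrib, Finset.sum_sub_distrib, ← Finset.mul_sum,
        Finset.sum_const, Finset.card_fin, nsmul_eq_mul, hsumC]
      ring
    rw [this, ← hμ]
    field_simp
  rw [hRHS]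
  simp only [specNorm]
  -- action of the commutator
  set A : Matrix (Fin N) (Fin N) ℝ :=
    Matrix.diagonal C * Matrix.of (fun _ _ => (1:ℝ)/N) -
      Matrix.of (fun _ _ => (1:ℝ)/N) * Matrix.diagonal C with hA
  have hAij : ∀ i j, A i j = (C i - C j) / N := by
    intro i j
    simp [hA, Matrix.sub_apply, Matrix.diagonal_mul, Matrix.mul_diagonal]
    ring
  have happ : ∀ (x : EuclideanSpace ℝ (Fin N)) (i : Fin N),
      (Matrix.toEuclideanCLM (𝕜 := ℝ) A x) i
        = (d i * (∑ j, x j) - ∑ j, d j * x j) / N := by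
    intro x i
    have h1 : (Matrix.toEuclideanCLM (𝕜 := ℝ) A x) i
        = (Matrix.toLin' A (WithLp.equiv 2 _ x)) i := rfl
    rw [h1, Matrix.toLin'_apply]
    show (∑ j, A i j * x j) = _
    have : ∀ j ∈ Finset.univ, A i j * x j = (d i * x j - d j * x j) / N := by
      intro j _
      rw [hAij]; simp only [hdd]; ring
    rw [Finset.sum_congr rfl this, ← Finset.sum_div, Finset.sum_sub_distrib, Finset.mul_sum]
  have hnormsq : ∀ (x : EuclideanSpace ℝ (Fin N)),
      ‖Matrix.toEuclideanCLM (𝕜 := ℝ) A x‖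
        = Real.sqrt (∑ i, ((d i * (∑ j, x j) - ∑ j, d j * x j) / N)^2) := by
    intro x
    rw [EuclideanSpace.norm_eq]
    congr 1
    refine Finset.sum_congr rfl fun i _ => ?_
    rw [happ, Real.norm_eq_abs, sq_abs]
  have hxnorm : ∀ (x : EuclideanSpace ℝ (Fin N)), ‖x‖ = Real.sqrt (∑ i, x i ^2) := by
    intro x
    rw [EuclideanSpace.norm_eq]
    congr 1
    exact Finset.sum_congr rfl fun i _ => by rw [Real.norm_eq_abs, sq_abs]
  apply le_antisymm
  · -- upper bound
    apply ContinuousLinearMap.opNorm_le_bound _ (Real.sqrt_nonneg _)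
    intro x
    rw [hnormsq, hxnorm, ← Real.sqrt_mul (by positivity) (∑ i, x i ^2)]
    apply Real.sqrt_le_sqrt
    have key := key_ineq (Nat.lt_of_lt_of_le Nat.zero_lt_one hN) d (fun i => x i) hd0
    have hsum : ∑ i, ((d i * (∑ j, x j) - ∑ j, d j * x j) / N)^2
        = ((∑ j, x j)^2 * S + N * (∑ j, d j * x j)^2
           - 2 * (∑ j, x j) * (∑ j, d j * x j) * (∑ i, d i)) / N^2 := by
      simp only [div_pow]
      rw [← Finset.sum_div]
      congr 1
      have : ∀ i ∈ Finset.univ, (d i * (∑ j, x j) - ∑ j, d j * x j)^2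
          = (∑ j, x j)^2 * d i^2 + (∑ j, d j * x j)^2
            - (2 * (∑ j, x j) * (∑ j, d j * x j)) * d i := by
        intro i _; ring
      rw [Finset.sum_congr rfl this]
      simp only [Finset.sum_add_distrib, Finset.sum_sub_distrib, ← Finset.mul_sum,
        Finset.sum_const, Finset.card_fin, nsmul_eq_mul, ← hS]
    rw [hsum, hd0]
    rw [div_le_iff₀ (by positivity)]
    calc (∑ j, x j)^2 * S + ↑N * (∑ j, d j * x j)^2 - 2 * (∑ j, x j) * (∑ j, d j * x j) * 0
        = (∑ j, x j)^2 * S + ↑N * (∑ j, d j * x j)^2 := by ring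
      _ ≤ (N:ℝ) * S * (∑ i, x i ^2) := key
      _ = S / ↑N * (∑ i, x i ^ 2) * ↑N ^ 2 := by field_simp
  · -- lower bound via the all-ones vector
    set o : EuclideanSpace ℝ (Fin N) := (WithLp.equiv 2 _).symm (fun _ => (1:ℝ)) with ho
    have hoi : ∀ i, o i = 1 := fun i => rfl
    have honorm : ‖o‖ = Real.sqrt N := by
      rw [hxnorm]
      simp [hoi]
    have hTo : ‖Matrix.toEuclideanCLM (𝕜 := ℝ) A o‖ = Real.sqrt S := by
      rw [hnormsq]
      congr 1
      rw [hS]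
      refine Finset.sum_congr rfl fun i _ => ?_
      simp only [hoi]
      rw [Finset.sum_const, Finset.card_fin, nsmul_eq_mul, mul_one]
      have : ∀ j ∈ Finset.univ, d j * (1:ℝ) = d j := fun j _ => mul_one _
      rw [Finset.sum_congr rfl this, hd0]
      field_simp
      ring
    have hle := (Matrix.toEuclideanCLM (𝕜 := ℝ) A).le_opNorm o
    rw [hTo, honorm] at hle
    have hsq : Real.sqrt (S / N) = Real.sqrt S / Real.sqrt N := Real.sqrt_div hSnn N
    rw [hsq, div_le_iff₀ (Real.sqrt_pos.mpr hN0)]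
    exact hle
end

section
/- Let N ≥ 1 and C : Fin N → ℝ, and let A be the N×N real matrix with entries A_{ij} = C(i) − C(j). Then ‖A‖ = √(N · Σ_i C(i)² − (Σ_i C(i))²). -/
open Matrix

/-- Auxiliary: the cube identity for the skew-symmetric matrix `A_{ij} = C i - C j`. -/
lemma cube_eq {N : ℕ} (C : Fin N → ℝ) :
    (Matrix.of fun i j => C i - C j) * (Matrix.of fun i j => C i - C j) *
      (Matrix.of fun i j => C i - C j)
    = (-((N : ℝ) * (∑ i, C i ^ 2) - (∑ i, C i) ^ 2)) • (Matrix.of fun i j => C i - C j) := by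
  set S := ∑ i, C i with hSdef
  set Q := ∑ i, C i ^ 2 with hQdef
  ext i k
  simp only [Matrix.mul_apply, Matrix.of_apply, Matrix.smul_apply, smul_eq_mul]
  have hinner : ∀ j, (∑ l, (C i - C l) * (C l - C j)) = S * (C i + C j) - N * (C i * C j) - Q := by
    intro j
    have h : ∀ l, (C i - C l) * (C l - C j) = (C i * C l + C j * C l) - (C l ^ 2 + C i * C j) :=
      fun l => by ring
    simp_rw [h, Finset.sum_sub_distrib, Finset.sum_add_distrib, ← Finset.mul_sum,
      Finset.sum_const, Finset.card_univ, Fintype.card_fin, nsmul_eq_mul, ← hSdef, ← hQdef]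
    ring
  simp_rw [hinner]
  have h2 : ∀ j, (S * (C i + C j) - N * (C i * C j) - Q) * (C j - C k) =
      (S - N * C i) * C j ^ 2 + (S * C i - S * C k + N * C i * C k - Q) * C j
        + (Q * C k - S * C i * C k) := fun j => by ring
  simp_rw [h2, Finset.sum_add_distrib, ← Finset.mul_sum, Finset.sum_const, Finset.card_univ,
    Fintype.card_fin, nsmul_eq_mul, ← hSdef, ← hQdef]
  ring


set_option synthInstance.maxHeartbeats 400000 in
/-- the spectral norm of the skew-symmetric matrix `A_{ij} = C(i) - C(j)`. -/
theorem specNorm_skew_rank_two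
    {N : ℕ} (hN : 1 ≤ N) (C : Fin N → ℝ)
    (A : Matrix (Fin N) (Fin N) ℝ)
    (hA : A = Matrix.of fun i j => C i - C j) :
    specNorm A = Real.sqrt (N * (∑ i, C i ^ 2) - (∑ i, C i) ^ 2) := by
  set σsq : ℝ := N * (∑ i, C i ^ 2) - (∑ i, C i) ^ 2 with hσdef
  have hσ : 0 ≤ σsq := by
    have h := Finset.sum_mul_sq_le_sq_mul_sq Finset.univ C (fun _ => (1 : ℝ))
    simp only [mul_one, one_pow, Finset.sum_const, Finset.card_univ, Fintype.card_fin,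
      nsmul_eq_mul] at h
    rw [hσdef]
    nlinarith
  have hstar : star A = -A := by
    subst hA
    ext i j
    simp [Matrix.star_apply]
  have hcube : A * A * A = (-σsq) • A := by rw [hσdef, hA]; exact cube_eq C
  have hmat : (star A * A) * (star A * A) = σsq • (star A * A) := by
    rw [hstar, neg_mul, neg_mul_neg, ← mul_assoc, hcube, smul_mul_assoc, neg_smul, smul_neg]
  set φ := Matrix.toEuclideanCLM (𝕜 := ℝ) (n := Fin N)
  set T := φ A with hT
  set b := star T * T with hb
  have hbdef : b = φ (star A * A) := by rw [hb, hT, ← map_star, ← _root_.map_mul]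
  have hb2 : b * b = σsq • b := by
    rw [hbdef, ← _root_.map_mul, hmat, _root_.map_smul]
  have hbT : ‖b‖ = ‖T‖ * ‖T‖ := ContinuousLinearMap.norm_adjoint_comp_self T
  have hstarb : star b = b := by rw [hb, StarMul.star_mul, star_star]
  have hbnorm : ‖b‖ * ‖b‖ = σsq * ‖b‖ := by
    calc ‖b‖ * ‖b‖ = ‖star b * b‖ := (ContinuousLinearMap.norm_adjoint_comp_self b).symm
    _ = ‖b * b‖ := by rw [hstarb]
    _ = ‖σsq • b‖ := by rw [hb2]
    _ = σsq * ‖b‖ := by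
      rw [show ‖σsq • b‖ = ‖σsq‖ * ‖b‖ from norm_smul σsq b, Real.norm_eq_abs, abs_of_nonneg hσ]
  rcases eq_or_ne ‖b‖ 0 with h0 | h0
  · have hT0 : ‖T‖ = 0 := by
      have := hbT.symm.trans h0
      nlinarith [norm_nonneg T]
    have hA0 : A = 0 := by
      have : φ A = φ 0 := by rw [map_zero]; exact norm_eq_zero.mp hT0
      exact φ.injective this
    have hCconst : ∀ i, C i = C ⟨0, hN⟩ := by
      intro i
      have := congrFun (congrFun (hA ▸ hA0) i) ⟨0, hN⟩
      simp [Matrix.of_apply] at this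
      linarith
    have hσ0 : σsq = 0 := by
      rw [hσdef]
      have h1 : (∑ i, C i) = N * C ⟨0, hN⟩ := by
        simp_rw [fun i => hCconst i]
        simp [Finset.sum_const]
      have h2 : (∑ i, C i ^ 2) = N * C ⟨0, hN⟩ ^ 2 := by
        simp_rw [fun i => hCconst i]
        simp [Finset.sum_const]
      rw [h1, h2]; ring
    rw [hσ0, Real.sqrt_zero]
    exact (show specNorm A = ‖T‖ from rfl).trans hT0
  · have hbσ : ‖b‖ = σsq := mul_right_cancel₀ h0 (by linarith [hbnorm])
    have hTT : ‖T‖ * ‖T‖ = σsq := by rw [← hbT, hbσ]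
    rw [show specNorm A = ‖T‖ from rfl, ← hTT, Real.sqrt_mul_self (norm_nonneg T)]
end

section
/- Let G be a simple graph on a finite vertex set V with edge set E, |E| ≥ 1, and let cut(W) denote the number of edges with exactly one endpoint in W. Let N = 2^{|V|}, index coordinates of ℂ^N by subsets W ⊆ V, let H_C be the diagonal matrix with diagonal entries cut(W), let C_max = max_W cut(W), and let H₁ = C_max·I − H_C. Let ψ₀ be the uniform unit vector and H₀ = H_Grover = I − ψ₀ψ₀*. Let p ≥ 1, let β, γ : Fin p → ℝ satisfy |β_j| ≤ 2π and |γ_j| ≤ 2π, let ψ_p be the QAOA state after p rounds, and let λ ∈ ℝ be defined by ⟨ψ_p, H_C ψ_p⟩ = λ·C_max. Then p · 2π · √|E| ≥ 1 − |⟨ψ₀, ψ_p⟩|² + λ·C_max − |E|/2. -/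
set_option maxHeartbeats 2000000
set_option linter.unusedSectionVars false
set_option linter.unusedVariables false

open Matrix Complex
open scoped ComplexOrder

/-- `cutValue G W` is the number of edges of `G` with exactly one endpoint in `W`. -/
noncomputable def cutValue {V : Type*} [Fintype V] [DecidableEq V]
    (G : SimpleGraph V) [DecidableRel G.Adj] (W : Finset V) : ℕ :=
  (G.edgeFinset.filter fun e => ∃ a ∈ W, ∃ b ∉ W, e = s(a, b)).card

/-! ### Combinatorial counting lemmas -/

section Comb

open Finset

variable {V : Type*} [Fintype V] [DecidableEq V]

/-- the cut predicate -/
def cutP (e : Sym2 V) (W : Finset V) : Prop := ∃ a ∈ W, ∃ b ∉ W, e = s(a, b)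

instance (e : Sym2 V) (W : Finset V) : Decidable (cutP e W) := by
  unfold cutP; infer_instance

lemma cutP_iff (u v : V) (W : Finset V) :
    cutP s(u, v) W ↔ ((u ∈ W ∧ v ∉ W) ∨ (v ∈ W ∧ u ∉ W)) := by
  constructor
  · rintro ⟨a, ha, b, hb, h⟩
    rw [Sym2.eq_iff] at h
    rcases h with ⟨rfl, rfl⟩ | ⟨rfl, rfl⟩
    · exact Or.inl ⟨ha, hb⟩
    · exact Or.inr ⟨ha, hb⟩
  · rintro (⟨h1, h2⟩ | ⟨h1, h2⟩)
    · exact ⟨u, h1, v, h2, rfl⟩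
    · exact ⟨v, h1, u, h2, by rw [Sym2.eq_swap]⟩

lemma mem_symmDiff_singleton (x y : V) (W : Finset V) :
    y ∈ symmDiff W {x} ↔ (if y = x then y ∉ W else y ∈ W) := by
  rw [Finset.mem_symmDiff]
  by_cases h : y = x <;> simp [h]

/-- flipping an endpoint flips the cut predicate -/
lemma cutP_flip {u v : V} (huv : u ≠ v) (x : V) (hx : x = u ∨ x = v) (W : Finset V) :
    cutP s(u, v) (symmDiff W {x}) ↔ ¬ cutP s(u, v) W := by
  rw [cutP_iff, cutP_iff, mem_symmDiff_singleton, mem_symmDiff_singleton]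
  rcases hx with rfl | rfl
  · simp only [if_pos rfl, if_neg (Ne.symm huv)]; tauto
  · simp only [if_pos rfl, if_neg huv]; tauto

/-- flipping a non-endpoint preserves the cut predicate -/
lemma cutP_flip_not {u v x : V} (hxu : x ≠ u) (hxv : x ≠ v) (W : Finset V) :
    cutP s(u, v) (symmDiff W {x}) ↔ cutP s(u, v) W := by
  rw [cutP_iff, cutP_iff, mem_symmDiff_singleton, mem_symmDiff_singleton,
    if_neg (Ne.symm hxu), if_neg (Ne.symm hxv)]

lemma symmDiff_invol (x : V) (W : Finset V) : symmDiff (symmDiff W {x}) {x} = W := by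
  rw [symmDiff_assoc, symmDiff_self, symmDiff_bot]

/-- generic half-count via a flip -/
lemma card_filter_flip (P Q : Finset V → Prop) [DecidablePred P] [DecidablePred Q] (x : V)
    (hP : ∀ W, P (symmDiff W {x}) ↔ ¬ P W) (hQ : ∀ W, Q (symmDiff W {x}) ↔ Q W) :
    2 * (univ.filter fun W => P W ∧ Q W).card = (univ.filter Q).card := by
  have h1 : (univ.filter fun W => P W ∧ Q W).card
      = (univ.filter fun W => ¬ P W ∧ Q W).card := by
    apply Finset.card_bij' (fun W _ => symmDiff W {x}) (fun W _ => symmDiff W {x})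
    · intro W _; exact symmDiff_invol x W
    · intro W _; exact symmDiff_invol x W
    · intro W hW
      simp only [Finset.mem_filter, Finset.mem_univ, true_and] at hW ⊢
      exact ⟨(hP W).1.mt (not_not.2 hW.1), (hQ W).2 hW.2⟩
    · intro W hW
      simp only [Finset.mem_filter, Finset.mem_univ, true_and] at hW ⊢
      exact ⟨by rw [hP]; exact hW.1, (hQ W).2 hW.2⟩
  have h2 : (univ.filter fun W => P W ∧ Q W).card
      + (univ.filter fun W => ¬ P W ∧ Q W).card = (univ.filter Q).card := by
    have h := Finset.card_filter_add_card_filter_not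
      (s := univ.filter Q) (p := P)
    rw [Finset.filter_filter, Finset.filter_filter] at h
    simpa [and_comm] using h
  omega

lemma two_mul_card_cut {u v : V} (huv : u ≠ v) :
    2 * (univ.filter fun W : Finset V => cutP s(u, v) W).card = Fintype.card (Finset V) := by
  have h := card_filter_flip (fun W => cutP s(u, v) W) (fun _ => True) u
    (fun W => cutP_flip huv u (Or.inl rfl) W) (fun _ => Iff.rfl)
  simpa using h

lemma four_mul_card_cut_pair {u v c d : V} (huv : u ≠ v) (hcd : c ≠ d)
    (hne : s(u, v) ≠ s(c, d)) :
    4 * (univ.filter fun W : Finset V => cutP s(u, v) W ∧ cutP s(c, d) W).card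
      = Fintype.card (Finset V) := by
  obtain ⟨x, hx, hxc, hxd⟩ : ∃ x, (x = u ∨ x = v) ∧ x ≠ c ∧ x ≠ d := by
    by_cases huc : u = c
    · refine ⟨v, Or.inr rfl, ?_, ?_⟩
      · rintro rfl; exact huv huc
      · rintro rfl; exact hne (by rw [huc])
    · by_cases hud : u = d
      · refine ⟨v, Or.inr rfl, ?_, ?_⟩
        · rintro rfl; exact hne (by rw [hud, Sym2.eq_swap])
        · rintro rfl; exact huv hud
      · exact ⟨u, Or.inl rfl, huc, hud⟩
  have h : 2 * (univ.filter fun W : Finset V => cutP s(u, v) W ∧ cutP s(c, d) W).card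
      = (univ.filter fun W : Finset V => cutP s(c, d) W).card :=
    card_filter_flip (fun W => cutP s(u, v) W) (fun W => cutP s(c, d) W) x
      (fun W => cutP_flip huv x hx W) (fun W => cutP_flip_not hxc hxd W)
  have h2 := two_mul_card_cut (V := V) hcd
  omega

variable (G : SimpleGraph V) [DecidableRel G.Adj]

lemma edge_rep {e : Sym2 V} (he : e ∈ G.edgeFinset) : ∃ u v, u ≠ v ∧ e = s(u, v) := by
  induction e using Sym2.inductionOn with
  | hf u v =>
    have hadj : G.Adj u v := by simpa using he
    exact ⟨u, v, hadj.ne, rfl⟩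

lemma cutValue_eq (W : Finset V) :
    cutValue G W = ∑ e ∈ G.edgeFinset, if cutP e W then 1 else 0 := by
  rw [cutValue, Finset.card_filter]
  exact Finset.sum_congr rfl fun e _ => if_congr Iff.rfl rfl rfl

lemma sum_cutValue :
    2 * ∑ W : Finset V, cutValue G W
      = Fintype.card (Finset V) * G.edgeFinset.card := by
  simp_rw [cutValue_eq, Finset.mul_sum]
  rw [Finset.sum_comm]
  rw [Finset.sum_congr rfl fun e he => ?_]
  · rw [Finset.sum_const, smul_eq_mul, mul_comm]
  · obtain ⟨u, v, huv, rfl⟩ := edge_rep G he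
    rw [← Finset.mul_sum, ← Finset.card_filter]
    exact two_mul_card_cut huv

lemma sum_cutValue_sq :
    4 * ∑ W : Finset V, (cutValue G W) ^ 2
      = Fintype.card (Finset V) * (G.edgeFinset.card * (G.edgeFinset.card + 1)) := by
  have key : ∀ W : Finset V, (cutValue G W) ^ 2
      = ∑ e ∈ G.edgeFinset, ∑ f ∈ G.edgeFinset, if cutP e W ∧ cutP f W then 1 else 0 := by
    intro W
    rw [cutValue_eq, sq, Finset.sum_mul_sum]
    refine Finset.sum_congr rfl fun e _ => Finset.sum_congr rfl fun f _ => ?_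
    by_cases h1 : cutP e W <;> by_cases h2 : cutP f W <;> simp [h1, h2]
  have swap : ∑ W : Finset V, (cutValue G W) ^ 2
      = ∑ e ∈ G.edgeFinset, ∑ f ∈ G.edgeFinset,
        ∑ W : Finset V, if cutP e W ∧ cutP f W then 1 else 0 := by
    simp_rw [key]
    rw [Finset.sum_comm]
    exact Finset.sum_congr rfl fun e _ => Finset.sum_comm
  rw [swap]
  have step : ∀ e ∈ G.edgeFinset, ∀ f ∈ G.edgeFinset,
      4 * ∑ W : Finset V, (if cutP e W ∧ cutP f W then 1 else 0)
        = if e = f then 2 * Fintype.card (Finset V) else Fintype.card (Finset V) := by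
    intro e he f hf
    rw [← Finset.card_filter]
    by_cases hef : e = f
    · subst hef
      obtain ⟨u, v, huv, rfl⟩ := edge_rep G he
      rw [if_pos rfl]
      have h := two_mul_card_cut (V := V) huv
      have h3 : (univ.filter fun W : Finset V => cutP s(u, v) W ∧ cutP s(u, v) W).card
          = (univ.filter fun W : Finset V => cutP s(u, v) W).card := by
        congr 1
        exact Finset.filter_congr fun W _ => by simp
      omega
    · obtain ⟨u, v, huv, rfl⟩ := edge_rep G he
      obtain ⟨c, d, hcd, rfl⟩ := edge_rep G hf
      rw [if_neg hef]
      exact four_mul_card_cut_pair huv hcd hef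
  calc 4 * ∑ e ∈ G.edgeFinset, ∑ f ∈ G.edgeFinset,
        ∑ W : Finset V, (if cutP e W ∧ cutP f W then 1 else 0)
      = ∑ e ∈ G.edgeFinset, ∑ f ∈ G.edgeFinset,
        (if e = f then 2 * Fintype.card (Finset V) else Fintype.card (Finset V)) := by
        rw [Finset.mul_sum]
        refine Finset.sum_congr rfl fun e he => ?_
        rw [Finset.mul_sum]
        exact Finset.sum_congr rfl fun f hf => step e he f hf
    _ = Fintype.card (Finset V) * (G.edgeFinset.card * (G.edgeFinset.card + 1)) := by
        have h5 : ∀ e ∈ G.edgeFinset, ∑ f ∈ G.edgeFinset,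
            (if e = f then 2 * Fintype.card (Finset V) else Fintype.card (Finset V))
            = ∑ f ∈ G.edgeFinset, (Fintype.card (Finset V)
                + if e = f then Fintype.card (Finset V) else 0) := by
          intro e he
          refine Finset.sum_congr rfl fun f _ => ?_
          by_cases h : e = f <;> simp [h, two_mul]
        rw [Finset.sum_congr rfl h5]
        have h4 : ∀ e ∈ G.edgeFinset, (∑ f ∈ G.edgeFinset, (Fintype.card (Finset V)
            + if e = f then Fintype.card (Finset V) else 0))
            = G.edgeFinset.card * Fintype.card (Finset V) + Fintype.card (Finset V) := by
          intro e he
          rw [Finset.sum_add_distrib, Finset.sum_const, Finset.sum_ite_eq, if_pos he,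
            smul_eq_mul]
        rw [Finset.sum_congr rfl h4, Finset.sum_const, smul_eq_mul]
        ring

end Comb

/-! ### Matrix exponential lemmas -/

section Expm

open Matrix NormedSpace

variable {ι : Type*} [Fintype ι] [DecidableEq ι]

/-- exp of a scalar multiple of an idempotent -/
lemma exp_smul_idempotent (P : Matrix ι ι ℂ) (hP : P * P = P) (z : ℂ) :
    NormedSpace.exp (z • P) = 1 + (Complex.exp z - 1) • P := by
  letI : SeminormedRing (Matrix ι ι ℂ) := Matrix.linftyOpSemiNormedRing
  letI : NormedRing (Matrix ι ι ℂ) := Matrix.linftyOpNormedRing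
  letI : NormedAlgebra ℂ (Matrix ι ι ℂ) := Matrix.linftyOpNormedAlgebra
  have hPn : ∀ n : ℕ, P ^ (n + 1) = P := by
    intro n
    induction n with
    | zero => simp
    | succ k ih => rw [pow_succ, ih, hP]
  have hsum : Summable fun n : ℕ => ((n.factorial : ℂ))⁻¹ • (z • P) ^ n :=
    NormedSpace.expSeries_summable' (𝕂 := ℂ) (z • P)
  have hsumc : Summable fun n : ℕ => ((n.factorial : ℂ))⁻¹ • z ^ n :=
    NormedSpace.expSeries_summable' (𝕂 := ℂ) z
  have hsumc' : Summable fun n : ℕ => (((n + 1).factorial : ℂ))⁻¹ • z ^ (n + 1) :=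
    (summable_nat_add_iff 1).mpr hsumc
  rw [NormedSpace.exp_eq_tsum ℂ]
  simp only []
  rw [Summable.tsum_eq_zero_add hsum]
  have h1 : ∀ n : ℕ, (((n + 1).factorial : ℂ))⁻¹ • (z • P) ^ (n + 1)
      = ((((n + 1).factorial : ℂ))⁻¹ • z ^ (n + 1)) • P := by
    intro n
    rw [smul_pow, hPn, smul_smul, smul_eq_mul]
  simp_rw [h1]
  rw [Summable.tsum_smul_const hsumc']
  have h2 : (∑' n : ℕ, (((n + 1).factorial : ℂ))⁻¹ • z ^ (n + 1)) = Complex.exp z - 1 := by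
    have hce : Complex.exp z = ∑' n : ℕ, ((n.factorial : ℂ))⁻¹ • z ^ n := by
      rw [Complex.exp_eq_exp_ℂ, NormedSpace.exp_eq_tsum ℂ]
    rw [hce, Summable.tsum_eq_zero_add hsumc]
    simp
  rw [h2]
  simp

lemma vecMulVec_sq (x : ι → ℂ) (h : star x ⬝ᵥ x = 1) :
    Matrix.vecMulVec x (star x) * Matrix.vecMulVec x (star x) = Matrix.vecMulVec x (star x) := by
  ext i j
  simp only [Matrix.mul_apply, Matrix.vecMulVec_apply, Pi.star_apply]
  calc ∑ k, x i * star (x k) * (x k * star (x j))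
      = (∑ k, star (x k) * x k) * (x i * star (x j)) := by
        rw [Finset.sum_mul]
        exact Finset.sum_congr rfl fun k _ => by ring
    _ = x i * star (x j) := by
        have h2 : (∑ k, star (x k) * x k) = star x ⬝ᵥ x := rfl
        rw [h2, h, one_mul]

lemma vecMulVec_mulVec' (x y v : ι → ℂ) :
    Matrix.vecMulVec x y *ᵥ v = (y ⬝ᵥ v) • x := by
  ext i
  simp only [Matrix.mulVec, Matrix.vecMulVec_apply, dotProduct, Pi.smul_apply,
    smul_eq_mul]
  rw [Finset.sum_mul]
  exact Finset.sum_congr rfl fun k _ => by ring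

/-- the Grover mixer exponential formula -/
lemma exp_grover_mixer (ψ0 : ι → ℂ) (h : star ψ0 ⬝ᵥ ψ0 = 1) (z : ℂ) :
    NormedSpace.exp (z • ((1 : Matrix ι ι ℂ) - Matrix.vecMulVec ψ0 (star ψ0)))
      = Complex.exp z • (1 : Matrix ι ι ℂ)
        + (1 - Complex.exp z) • Matrix.vecMulVec ψ0 (star ψ0) := by
  letI : SeminormedRing (Matrix ι ι ℂ) := Matrix.linftyOpSemiNormedRing
  letI : NormedRing (Matrix ι ι ℂ) := Matrix.linftyOpNormedRing
  letI : NormedAlgebra ℂ (Matrix ι ι ℂ) := Matrix.linftyOpNormedAlgebra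
  set P := Matrix.vecMulVec ψ0 (star ψ0) with hPdef
  have hPP : P * P = P := vecMulVec_sq ψ0 h
  have hsplit : z • ((1 : Matrix ι ι ℂ) - P) = z • (1 : Matrix ι ι ℂ) + (-z) • P := by
    rw [smul_sub]; module
  have hcomm : Commute (z • (1 : Matrix ι ι ℂ)) ((-z) • P) := by
    apply Commute.smul_left
    apply Commute.smul_right
    exact (Commute.one_left P)
  rw [hsplit, Matrix.exp_add_of_commute _ _ hcomm]
  have h1 : NormedSpace.exp (z • (1 : Matrix ι ι ℂ)) = Complex.exp z • 1 := by
    rw [exp_smul_idempotent 1 (by simp) z]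
    module
  rw [h1, exp_smul_idempotent P hPP (-z)]
  rw [smul_mul_assoc, one_mul, smul_add, smul_smul]
  have hz : Complex.exp z * (Complex.exp (-z) - 1) = 1 - Complex.exp z := by
    rw [mul_sub, ← Complex.exp_add, add_neg_cancel, Complex.exp_zero, mul_one]
  rw [hz]

end Expm

/-! ### Analytic step lemmas -/

section Step

open Matrix Complex Finset

variable {ι : Type*} [Fintype ι] [DecidableEq ι]

lemma cs_bound (c : ι → ℝ) (ψ : ι → ℂ) (hψ : ∑ i, Complex.normSq (ψ i) = 1) :
    ‖∑ i, (c i : ℂ) * ψ i‖ ≤ Real.sqrt (∑ i, (c i) ^ 2) := by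
  calc ‖∑ i, (c i : ℂ) * ψ i‖ ≤ ∑ i, ‖(c i : ℂ) * ψ i‖ :=
        norm_sum_le _ _
    _ = ∑ i, |c i| * ‖ψ i‖ := by
        simp [norm_mul, Complex.norm_real]
    _ ≤ Real.sqrt (∑ i, |c i| ^ 2) * Real.sqrt (∑ i, ‖ψ i‖ ^ 2) :=
        Real.sum_mul_le_sqrt_mul_sqrt _ _ _
    _ = Real.sqrt (∑ i, (c i) ^ 2) := by
        have h1 : ∑ i, ‖ψ i‖ ^ 2 = 1 := by
          rw [← hψ]; exact Finset.sum_congr rfl fun i _ => Complex.sq_norm _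
        rw [h1, Real.sqrt_one, mul_one]
        congr 1
        exact Finset.sum_congr rfl fun i _ => by rw [_root_.sq_abs]

/-- conjugation swap for dot products -/
lemma conj_star_dot (x y : ι → ℂ) :
    (starRingEnd ℂ) (star x ⬝ᵥ y) = star y ⬝ᵥ x := by
  simp only [dotProduct, Pi.star_apply, map_sum, _root_.map_mul, Complex.conj_conj,
    RCLike.star_def]
  exact Finset.sum_congr rfl fun i _ => by rw [mul_comm]

/-- the norm-1 condition as a real sum -/
lemma star_dot_self (ψ : ι → ℂ) : star ψ ⬝ᵥ ψ = ((∑ i, Complex.normSq (ψ i) : ℝ) : ℂ) := by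
  simp only [dotProduct, Pi.star_apply]
  rw [Complex.ofReal_sum]
  exact Finset.sum_congr rfl fun i _ => by
    rw [Complex.normSq_eq_conj_mul_self]; rfl

lemma herm_swap (d : ι → ℝ) (x y : ι → ℂ) :
    star x ⬝ᵥ ((Matrix.diagonal fun i => (d i : ℂ)) *ᵥ y)
      = (starRingEnd ℂ) (star y ⬝ᵥ ((Matrix.diagonal fun i => (d i : ℂ)) *ᵥ x)) := by
  simp only [dotProduct, Pi.star_apply, Matrix.mulVec_diagonal, map_sum, _root_.map_mul,
    Complex.conj_conj, Complex.conj_ofReal, RCLike.star_def]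
  exact Finset.sum_congr rfl fun i _ => by ring

lemma mixer_step (d : ι → ℝ) (HC : Matrix ι ι ℂ)
    (hHC : HC = Matrix.diagonal fun i => (d i : ℂ))
    (s μ vr : ℝ) (hvr : 0 ≤ vr)
    (ψ0 : ι → ℂ) (hψ0 : ψ0 = fun _ => (s : ℂ))
    (hs1 : ∑ _i : ι, s ^ 2 = 1)
    (hμ : ∑ i : ι, s ^ 2 * d i = μ)
    (hvar : ∑ i : ι, (s * (d i - μ)) ^ 2 = vr)
    (ψ : ι → ℂ) (hψ : star ψ ⬝ᵥ ψ = 1)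
    (e : ℂ) (he : Complex.normSq e = 1)
    (ψ'' : ι → ℂ)
    (hψ'' : ψ'' = e • ψ + ((1 - e) * (star ψ0 ⬝ᵥ ψ)) • ψ0) :
    star ψ'' ⬝ᵥ ψ'' = 1 ∧
    (star ψ'' ⬝ᵥ (HC *ᵥ ψ'')).re ≤ (star ψ ⬝ᵥ (HC *ᵥ ψ)).re + 4 * Real.sqrt vr := by
  have he' : (starRingEnd ℂ) e * e = 1 := by
    rw [← Complex.normSq_eq_conj_mul_self, he, Complex.ofReal_one]
  set a := star ψ0 ⬝ᵥ ψ with ha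
  have hψsum : ∑ i, Complex.normSq (ψ i) = 1 := by
    have := star_dot_self ψ
    rw [hψ] at this
    exact_mod_cast this.symm
  have habs_a : ‖a‖ ≤ 1 := by
    have hrw : a = ∑ i, ((s : ℝ) : ℂ) * ψ i := by
      rw [ha, hψ0]; simp [dotProduct, Complex.conj_ofReal]
    rw [hrw]
    have := cs_bound (fun _ => s) ψ hψsum
    calc ‖∑ i, ((s : ℝ) : ℂ) * ψ i‖ ≤ Real.sqrt (∑ _i : ι, s ^ 2) := this
      _ = 1 := by rw [hs1, Real.sqrt_one]
  have h00 : star ψ0 ⬝ᵥ ψ0 = 1 := by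
    rw [star_dot_self]
    have hsum0 : ∑ i, Complex.normSq (ψ0 i) = 1 := by
      rw [hψ0, ← hs1]
      exact Finset.sum_congr rfl fun i _ => by simp [Complex.normSq_ofReal, sq]
    rw [hsum0, Complex.ofReal_one]
  have hψψ0 : star ψ ⬝ᵥ ψ0 = (starRingEnd ℂ) a := by
    rw [ha, ← conj_star_dot]
  set G := star ψ0 ⬝ᵥ (HC *ᵥ ψ) with hG
  have hswap : star ψ ⬝ᵥ (HC *ᵥ ψ0) = (starRingEnd ℂ) G := by
    rw [hG, hHC, herm_swap]
  have hM : star ψ0 ⬝ᵥ (HC *ᵥ ψ0) = ((μ : ℝ) : ℂ) := by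
    rw [hHC, hψ0, ← hμ]
    simp only [dotProduct, Pi.star_apply, Matrix.mulVec_diagonal, RCLike.star_def,
      Complex.conj_ofReal, Complex.ofReal_sum]
    exact Finset.sum_congr rfl fun i _ => by push_cast; ring
  set r := G - a * ((μ : ℝ) : ℂ) with hrdef
  have hr : r = ∑ i, ((s * (d i - μ) : ℝ) : ℂ) * ψ i := by
    rw [hrdef, hG, ha, hHC, hψ0]
    simp only [dotProduct, Pi.star_apply, Matrix.mulVec_diagonal, RCLike.star_def,
      Complex.conj_ofReal, Finset.sum_mul]
    rw [← Finset.sum_sub_distrib]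
    exact Finset.sum_congr rfl fun i _ => by push_cast; ring
  have habs_r : ‖r‖ ≤ Real.sqrt vr := by
    rw [hr]
    have := cs_bound (fun i => s * (d i - μ)) ψ hψsum
    calc ‖∑ i, ((s * (d i - μ) : ℝ) : ℂ) * ψ i‖
        ≤ Real.sqrt (∑ i, (s * (d i - μ)) ^ 2) := this
      _ = Real.sqrt vr := by rw [hvar]
  set u := 1 - e with hu
  set dd := u * a with hdd
  have expandA : star ψ'' ⬝ᵥ ψ''
      = (starRingEnd ℂ) e * e * (star ψ ⬝ᵥ ψ)
        + (starRingEnd ℂ) e * dd * (star ψ ⬝ᵥ ψ0)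
        + (starRingEnd ℂ) dd * e * (star ψ0 ⬝ᵥ ψ)
        + (starRingEnd ℂ) dd * dd * (star ψ0 ⬝ᵥ ψ0) := by
    rw [hψ'']
    simp only [star_add, star_smul, add_dotProduct, dotProduct_add, smul_dotProduct,
      dotProduct_smul, smul_eq_mul, RCLike.star_def, ← ha, ← hdd, ← hu]
    ring
  have partA : star ψ'' ⬝ᵥ ψ'' = 1 := by
    rw [expandA, hψ, hψψ0, h00, ← ha, hdd, hu]
    simp only [_root_.map_mul, map_sub, _root_.map_one]
    linear_combination (1 - (starRingEnd ℂ) a * a) * he'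
  refine ⟨partA, ?_⟩
  have expandB : star ψ'' ⬝ᵥ (HC *ᵥ ψ'')
      = (starRingEnd ℂ) e * e * (star ψ ⬝ᵥ (HC *ᵥ ψ))
        + (starRingEnd ℂ) e * dd * (star ψ ⬝ᵥ (HC *ᵥ ψ0))
        + (starRingEnd ℂ) dd * e * (star ψ0 ⬝ᵥ (HC *ᵥ ψ))
        + (starRingEnd ℂ) dd * dd * (star ψ0 ⬝ᵥ (HC *ᵥ ψ0)) := by
    rw [hψ'']
    simp only [Matrix.mulVec_add, Matrix.mulVec_smul, star_add, star_smul, add_dotProduct,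
      dotProduct_add, smul_dotProduct, dotProduct_smul, smul_eq_mul, RCLike.star_def,
      ← ha, ← hdd, ← hu]
    ring
  set w := (starRingEnd ℂ) dd * e * r with hw
  have partB : star ψ'' ⬝ᵥ (HC *ᵥ ψ'')
      = star ψ ⬝ᵥ (HC *ᵥ ψ) + (w + (starRingEnd ℂ) w) := by
    rw [expandB, hswap, hM, ← hG, hw, hrdef, hdd, hu]
    simp only [_root_.map_mul, map_sub, _root_.map_one, Complex.conj_conj,
      Complex.conj_ofReal]
    linear_combination (star ψ ⬝ᵥ (HC *ᵥ ψ) - (starRingEnd ℂ) a * a * ((μ : ℝ) : ℂ)) * he'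
  rw [partB, Complex.add_re]
  have hwre : (w + (starRingEnd ℂ) w).re = 2 * w.re := by
    rw [Complex.add_re, Complex.conj_re]; ring
  rw [hwre]
  have habs_e : ‖e‖ = 1 := by
    have := Complex.sq_norm e
    rw [he] at this
    nlinarith [norm_nonneg e]
  have habs_u : ‖u‖ ≤ 2 := by
    rw [hu]
    calc ‖1 - e‖ ≤ ‖(1 : ℂ)‖ + ‖e‖ := by
          simpa using norm_sub_le (1 : ℂ) e
      _ = 2 := by rw [habs_e, norm_one]; norm_num
  have habs_w : ‖w‖ ≤ 2 * Real.sqrt vr := by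
    rw [hw, hdd]
    simp only [norm_mul, Complex.norm_conj, habs_e, mul_one]
    calc ‖u‖ * ‖a‖ * ‖r‖
        ≤ (2 * 1) * Real.sqrt vr := by
          apply mul_le_mul
          · exact mul_le_mul habs_u habs_a (norm_nonneg a) (by norm_num)
          · exact habs_r
          · exact norm_nonneg r
          · norm_num
      _ = 2 * Real.sqrt vr := by ring
  have hfin : w.re ≤ 2 * Real.sqrt vr := le_trans (Complex.re_le_norm w) habs_w
  linarith

lemma cost_step (d : ι → ℝ) (HC : Matrix ι ι ℂ)
    (hHC : HC = Matrix.diagonal fun i => (d i : ℂ))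
    (u : ι → ℂ) (hu : ∀ i, (starRingEnd ℂ) (u i) * u i = 1) (ψ : ι → ℂ) :
    star (Matrix.diagonal u *ᵥ ψ) ⬝ᵥ (Matrix.diagonal u *ᵥ ψ) = star ψ ⬝ᵥ ψ ∧
    star (Matrix.diagonal u *ᵥ ψ) ⬝ᵥ (HC *ᵥ (Matrix.diagonal u *ᵥ ψ))
      = star ψ ⬝ᵥ (HC *ᵥ ψ) := by
  subst hHC
  constructor
  · simp only [dotProduct, Pi.star_apply, Matrix.mulVec_diagonal, RCLike.star_def,
      _root_.map_mul]
    exact Finset.sum_congr rfl fun i _ =>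
      by linear_combination ((starRingEnd ℂ) (ψ i) * ψ i) * hu i
  · simp only [dotProduct, Pi.star_apply, Matrix.mulVec_diagonal, RCLike.star_def,
      _root_.map_mul]
    exact Finset.sum_congr rfl fun i _ =>
      by linear_combination ((d i : ℂ) * (starRingEnd ℂ) (ψ i) * ψ i) * hu i

lemma exp_cost_diag (g : ι → ℝ) (γ : ℝ) :
    ∃ u : ι → ℂ, (∀ i, (starRingEnd ℂ) (u i) * u i = 1) ∧
      NormedSpace.exp ((-(γ : ℂ) * Complex.I) • Matrix.diagonal fun i => ((g i : ℝ) : ℂ))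
        = Matrix.diagonal u := by
  have hdiag : ((-(γ : ℂ) * Complex.I) • Matrix.diagonal fun i => ((g i : ℝ) : ℂ))
      = Matrix.diagonal fun i => ((-γ * g i : ℝ) : ℂ) * Complex.I := by
    rw [← Matrix.diagonal_smul]
    apply congrArg Matrix.diagonal
    funext i
    show (-(γ : ℂ) * Complex.I) * ((g i : ℝ) : ℂ) = ((-γ * g i : ℝ) : ℂ) * Complex.I
    push_cast
    ring
  refine ⟨fun i => Complex.exp (((-γ * g i : ℝ) : ℂ) * Complex.I), fun i => ?_, ?_⟩
  · rw [← Complex.normSq_eq_conj_mul_self]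
    have h1 : ‖Complex.exp (((-γ * g i : ℝ) : ℂ) * Complex.I)‖ = 1 :=
      Complex.norm_exp_ofReal_mul_I _
    have h2 := Complex.sq_norm (Complex.exp (((-γ * g i : ℝ) : ℂ) * Complex.I))
    rw [h1] at h2
    rw [← h2]
    norm_num
  · rw [hdiag, Matrix.exp_diagonal, Pi.exp_def]
    congr 1
    funext i
    rw [← Complex.exp_eq_exp_ℂ]

end Step

/-! ### unfolding the QAOA state -/

lemma qaoaState_zero {ι : Type*} [Fintype ι] [DecidableEq ι]
    (H0 H1 : Matrix ι ι ℂ) (β γ : Fin 0 → ℝ) (ψ0 : ι → ℂ) :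
    qaoaState H0 H1 0 β γ ψ0 = ψ0 := by
  unfold qaoaState
  simp [Matrix.one_mulVec]

lemma qaoaState_succ {ι : Type*} [Fintype ι] [DecidableEq ι]
    (H0 H1 : Matrix ι ι ℂ) (p : ℕ) (β γ : Fin (p + 1) → ℝ) (ψ0 : ι → ℂ) :
    qaoaState H0 H1 (p + 1) β γ ψ0
      = NormedSpace.exp ((-(β (Fin.last p) : ℂ) * Complex.I) • H0) *ᵥ
        (NormedSpace.exp ((-(γ (Fin.last p) : ℂ) * Complex.I) • H1) *ᵥ
          qaoaState H0 H1 p (β ∘ Fin.castSucc) (γ ∘ Fin.castSucc) ψ0) := by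
  unfold qaoaState
  rw [List.ofFn_succ, List.prod_cons]
  have hfun : (fun j : Fin p =>
      NormedSpace.exp ((-(β j.succ.rev : ℂ) * Complex.I) • H0) *
      NormedSpace.exp ((-(γ j.succ.rev : ℂ) * Complex.I) • H1))
      = fun j : Fin p =>
      NormedSpace.exp ((-(((β ∘ Fin.castSucc) j.rev : ℝ) : ℂ) * Complex.I) • H0) *
      NormedSpace.exp ((-(((γ ∘ Fin.castSucc) j.rev : ℝ) : ℂ) * Complex.I) • H1) := by
    funext j
    rw [Fin.rev_succ]
    rfl
  rw [hfun, Fin.rev_zero, Matrix.mulVec_mulVec, Matrix.mulVec_mulVec, Matrix.mul_assoc]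

/-! ### the main invariant -/

lemma qaoa_invariant {ι : Type*} [Fintype ι] [DecidableEq ι]
    (d g : ι → ℝ) (HC H0 H1 : Matrix ι ι ℂ)
    (hHC : HC = Matrix.diagonal fun i => (d i : ℂ))
    (hH1 : H1 = Matrix.diagonal fun i => ((g i : ℝ) : ℂ))
    (s μ vr : ℝ) (hvr : 0 ≤ vr)
    (ψ0 : ι → ℂ) (hψ0 : ψ0 = fun _ => (s : ℂ))
    (hH0 : H0 = 1 - Matrix.vecMulVec ψ0 (star ψ0))
    (hs1 : ∑ _i : ι, s ^ 2 = 1)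
    (hμ : ∑ i : ι, s ^ 2 * d i = μ)
    (hvar : ∑ i : ι, (s * (d i - μ)) ^ 2 = vr) :
    ∀ p (β γ : Fin p → ℝ),
      star (qaoaState H0 H1 p β γ ψ0) ⬝ᵥ qaoaState H0 H1 p β γ ψ0 = 1 ∧
      (star (qaoaState H0 H1 p β γ ψ0) ⬝ᵥ (HC *ᵥ qaoaState H0 H1 p β γ ψ0)).re
        ≤ μ + p * (4 * Real.sqrt vr) := by
  have h00 : star ψ0 ⬝ᵥ ψ0 = 1 := by
    rw [star_dot_self]
    have hsum0 : ∑ i, Complex.normSq (ψ0 i) = 1 := by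
      rw [hψ0, ← hs1]
      exact Finset.sum_congr rfl fun i _ => by simp [Complex.normSq_ofReal, sq]
    rw [hsum0, Complex.ofReal_one]
  have hM : star ψ0 ⬝ᵥ (HC *ᵥ ψ0) = ((μ : ℝ) : ℂ) := by
    rw [hHC, hψ0, ← hμ]
    simp only [dotProduct, Pi.star_apply, Matrix.mulVec_diagonal, RCLike.star_def,
      Complex.conj_ofReal, Complex.ofReal_sum]
    exact Finset.sum_congr rfl fun i _ => by push_cast; ring
  intro p
  induction p with
  | zero =>
    intro β γ
    rw [qaoaState_zero]
    refine ⟨h00, ?_⟩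
    rw [hM]
    simp
  | succ p IH =>
    intro β γ
    obtain ⟨ih1, ih2⟩ := IH (β ∘ Fin.castSucc) (γ ∘ Fin.castSucc)
    rw [qaoaState_succ]
    set ψ := qaoaState H0 H1 p (β ∘ Fin.castSucc) (γ ∘ Fin.castSucc) ψ0 with hψdef
    obtain ⟨u, hu, hexp⟩ := exp_cost_diag g (γ (Fin.last p))
    rw [hH1, hexp]
    set ψ' := Matrix.diagonal u *ᵥ ψ with hψ'def
    obtain ⟨hc1, hc2⟩ := cost_step d HC hHC u hu ψ
    have hc1' : star ψ' ⬝ᵥ ψ' = 1 := by rw [hψ'def, hc1, ih1]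
    have hmix : NormedSpace.exp ((-(β (Fin.last p) : ℂ) * Complex.I) • H0)
        = Complex.exp (-(β (Fin.last p) : ℂ) * Complex.I) • (1 : Matrix ι ι ℂ)
          + (1 - Complex.exp (-(β (Fin.last p) : ℂ) * Complex.I))
            • Matrix.vecMulVec ψ0 (star ψ0) := by
      rw [hH0]; exact exp_grover_mixer ψ0 h00 _
    rw [hmix]
    set e := Complex.exp (-(β (Fin.last p) : ℂ) * Complex.I) with he_def
    have hψ'' : (e • (1 : Matrix ι ι ℂ)
          + (1 - e) • Matrix.vecMulVec ψ0 (star ψ0)) *ᵥ ψ'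
        = e • ψ' + ((1 - e) * (star ψ0 ⬝ᵥ ψ')) • ψ0 := by
      rw [Matrix.add_mulVec, Matrix.smul_mulVec, Matrix.smul_mulVec,
        Matrix.one_mulVec, vecMulVec_mulVec', smul_smul]
    rw [hψ'']
    have he : Complex.normSq e = 1 := by
      rw [he_def]
      have harg : (-(β (Fin.last p) : ℂ) * Complex.I)
          = ((-(β (Fin.last p)) : ℝ) : ℂ) * Complex.I := by push_cast; ring
      rw [harg]
      have habs := Complex.norm_exp_ofReal_mul_I (-(β (Fin.last p)))
      have h2 := Complex.sq_norm (Complex.exp (((-(β (Fin.last p)) : ℝ) : ℂ) * Complex.I))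
      rw [habs] at h2
      rw [← h2]
      norm_num
    obtain ⟨hm1, hm2⟩ := mixer_step d HC hHC s μ vr hvr ψ0 hψ0 hs1 hμ hvar ψ' hc1' e he
      (e • ψ' + ((1 - e) * (star ψ0 ⬝ᵥ ψ')) • ψ0) rfl
    refine ⟨hm1, ?_⟩
    calc (star (e • ψ' + ((1 - e) * (star ψ0 ⬝ᵥ ψ')) • ψ0) ⬝ᵥ
            (HC *ᵥ (e • ψ' + ((1 - e) * (star ψ0 ⬝ᵥ ψ')) • ψ0))).re
        ≤ (star ψ' ⬝ᵥ (HC *ᵥ ψ')).re + 4 * Real.sqrt vr := hm2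
      _ = (star ψ ⬝ᵥ (HC *ᵥ ψ)).re + 4 * Real.sqrt vr := by rw [hψ'def, hc2]
      _ ≤ μ + p * (4 * Real.sqrt vr) + 4 * Real.sqrt vr := by linarith
      _ = μ + (p + 1 : ℕ) * (4 * Real.sqrt vr) := by push_cast; ring

/-- lower bound on the number of Grover-mixer QAOA rounds for Max-Cut. -/
theorem qaoa_rounds_lower_bound_grover_mixer_maxcut
    {V : Type*} [Fintype V] [DecidableEq V]
    (G : SimpleGraph V) [DecidableRel G.Adj] (hE : 1 ≤ G.edgeFinset.card)
    (HC H0 H1 : Matrix (Finset V) (Finset V) ℂ)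
    (hHC : HC = Matrix.diagonal fun W => (cutValue G W : ℂ))
    (hH1 : H1 = ((Finset.univ.sup (cutValue G) : ℕ) : ℂ) •
        (1 : Matrix (Finset V) (Finset V) ℂ) - HC)
    (ψ0 : Finset V → ℂ) (hψ0 : ψ0 = fun _ => ((Real.sqrt (2 ^ Fintype.card V))⁻¹ : ℂ))
    (hH0 : H0 = 1 - Matrix.vecMulVec ψ0 (star ψ0))
    (p : ℕ) (hp : 1 ≤ p) (β γ : Fin p → ℝ)
    (hβ : ∀ j, |β j| ≤ 2 * Real.pi) (hγ : ∀ j, |γ j| ≤ 2 * Real.pi)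
    (ψp : Finset V → ℂ) (hψp : ψp = qaoaState H0 H1 p β γ ψ0)
    (lam : ℝ)
    (hlam : (star ψp ⬝ᵥ (HC *ᵥ ψp)).re = lam * (Finset.univ.sup (cutValue G) : ℕ)) :
    (p : ℝ) * (2 * Real.pi) * Real.sqrt (G.edgeFinset.card : ℝ) ≥
      1 - ‖star ψ0 ⬝ᵥ ψp‖ ^ 2 +
        lam * (Finset.univ.sup (cutValue G) : ℕ) - (G.edgeFinset.card : ℝ) / 2 := by
  subst hψp
  set n := Fintype.card V with hn
  set m := G.edgeFinset.card with hm
  set Cmax : ℕ := Finset.univ.sup (cutValue G) with hCmax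
  set d : Finset V → ℝ := fun W => (cutValue G W : ℝ) with hd
  set s : ℝ := (Real.sqrt (2 ^ n))⁻¹ with hs
  have hN : (Fintype.card (Finset V) : ℝ) = 2 ^ n := by
    rw [Fintype.card_finset]
    push_cast
    rfl
  have h2n : (0:ℝ) < 2 ^ n := by positivity
  have hs2 : s ^ 2 = ((2:ℝ) ^ n)⁻¹ := by
    rw [hs, inv_pow, Real.sq_sqrt h2n.le]
  have hHC' : HC = Matrix.diagonal fun W => ((d W : ℝ) : ℂ) := by
    rw [hHC]
    apply congrArg Matrix.diagonal
    funext W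
    rw [hd]
    norm_cast
  set g : Finset V → ℝ := fun W => (Cmax : ℝ) - d W with hg
  have hH1' : H1 = Matrix.diagonal fun W => ((g W : ℝ) : ℂ) := by
    rw [hH1, hHC', Matrix.smul_one_eq_diagonal, Matrix.diagonal_sub]
    apply congrArg Matrix.diagonal
    funext W
    rw [hg]
    push_cast
    ring
  have hψ0' : ψ0 = fun _ => ((s : ℝ) : ℂ) := by
    rw [hψ0, hs]
    funext x
    push_cast
    rfl
  have hs1 : ∑ _W : Finset V, s ^ 2 = 1 := by
    rw [Finset.sum_const, nsmul_eq_mul, Finset.card_univ, hN, hs2]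
    exact mul_inv_cancel₀ h2n.ne'
  have hsumd : ∑ W : Finset V, d W = (2:ℝ) ^ n * m / 2 := by
    have hnat := sum_cutValue G
    have hdsum_cast : ∑ W : Finset V, d W = ((∑ W : Finset V, cutValue G W : ℕ) : ℝ) := by
      push_cast; rfl
    have hcast : (2:ℝ) * ((∑ W : Finset V, cutValue G W : ℕ) : ℝ)
        = (Fintype.card (Finset V) : ℝ) * (G.edgeFinset.card : ℝ) := by
      exact_mod_cast congrArg (Nat.cast : ℕ → ℝ) hnat
    rw [← hm, hN] at hcast
    rw [hdsum_cast]
    linarith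
  have hsumd2 : ∑ W : Finset V, (d W) ^ 2 = (2:ℝ) ^ n * (m * (m + 1)) / 4 := by
    have hnat := sum_cutValue_sq G
    have hdsum_cast : ∑ W : Finset V, (d W) ^ 2
        = ((∑ W : Finset V, (cutValue G W) ^ 2 : ℕ) : ℝ) := by
      push_cast; rfl
    have hcast : (4:ℝ) * ((∑ W : Finset V, (cutValue G W) ^ 2 : ℕ) : ℝ)
        = (Fintype.card (Finset V) : ℝ) * ((G.edgeFinset.card : ℝ) * (G.edgeFinset.card + 1)) := by
      exact_mod_cast congrArg (Nat.cast : ℕ → ℝ) hnat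
    rw [← hm, hN] at hcast
    rw [hdsum_cast]
    push_cast at hcast ⊢
    linarith
  set μ : ℝ := (m : ℝ) / 2 with hμdef
  have hμ : ∑ W : Finset V, s ^ 2 * d W = μ := by
    rw [← Finset.mul_sum, hsumd, hs2, hμdef]
    field_simp
  set vr : ℝ := (m : ℝ) / 4 with hvrdef
  have hvar : ∑ W : Finset V, (s * (d W - μ)) ^ 2 = vr := by
    calc ∑ W : Finset V, (s * (d W - μ)) ^ 2
        = ∑ W : Finset V, (s ^ 2 * (d W) ^ 2 - (s ^ 2 * (2 * μ)) * d W + s ^ 2 * μ ^ 2) :=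
          Finset.sum_congr rfl fun W _ => by ring
      _ = s ^ 2 * (∑ W : Finset V, (d W) ^ 2) - (s ^ 2 * (2 * μ)) * (∑ W : Finset V, d W)
            + (Fintype.card (Finset V) : ℝ) * (s ^ 2 * μ ^ 2) := by
          rw [Finset.sum_add_distrib, Finset.sum_sub_distrib, ← Finset.mul_sum,
            ← Finset.mul_sum, Finset.sum_const, nsmul_eq_mul, Finset.card_univ]
      _ = vr := by
          rw [hsumd, hsumd2, hs2, hN, hμdef, hvrdef]
          field_simp
          ring
  obtain ⟨hn1, hf⟩ := qaoa_invariant d g HC H0 H1 hHC' hH1' s μ vr (by positivity)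
    ψ0 hψ0' hH0 hs1 hμ hvar p β γ
  have hm1 : (1:ℝ) ≤ (m : ℝ) := by exact_mod_cast hE
  have hsv : Real.sqrt vr = Real.sqrt (m : ℝ) / 2 := by
    rw [hvrdef, show (m:ℝ)/4 = (m : ℝ) * (1/2) ^ 2 by ring,
      Real.sqrt_mul (by positivity), Real.sqrt_sq (by norm_num)]
    ring
  have hsq1 : 1 ≤ Real.sqrt (m : ℝ) := by
    nlinarith [Real.sq_sqrt (by positivity : (0:ℝ) ≤ (m:ℝ)), Real.sqrt_nonneg (m:ℝ)]
  have hp1 : (1:ℝ) ≤ (p : ℝ) := by exact_mod_cast hp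
  have hpi := Real.pi_gt_three
  have h4 : (p : ℝ) * (4 * Real.sqrt vr) = (p : ℝ) * (2 * Real.sqrt (m : ℝ)) := by
    rw [hsv]; ring
  have hlc : lam * (Cmax : ℝ) ≤ (m : ℝ) / 2 + (p : ℝ) * (2 * Real.sqrt (m : ℝ)) := by
    rw [← hlam]
    calc (star (qaoaState H0 H1 p β γ ψ0) ⬝ᵥ
            (HC *ᵥ qaoaState H0 H1 p β γ ψ0)).re
        ≤ μ + (p : ℝ) * (4 * Real.sqrt vr) := hf
      _ = (m : ℝ) / 2 + (p : ℝ) * (2 * Real.sqrt (m : ℝ)) := by rw [hμdef, h4]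
  have habs : 0 ≤ ‖star ψ0 ⬝ᵥ qaoaState H0 H1 p β γ ψ0‖ ^ 2 := sq_nonneg _
  have hX : 1 ≤ (p : ℝ) * Real.sqrt (m : ℝ) := by nlinarith
  have hprod : (0:ℝ) ≤ (Real.pi - 1) * ((p : ℝ) * Real.sqrt (m : ℝ) - 1) := by
    apply mul_nonneg <;> linarith
  nlinarith [hprod, habs, hlc, hX, hpi]
end

section
/- Let H₀ and H₁ be N×N Hermitian positive-semidefinite complex matrices, let P₀ be an N×N orthogonal projector (P₀ = P₀* = P₀²) that commutes with H₀, let ψ₀ ∈ ℂ^N be a unit vector with H₀ψ₀ = 0, let p ≥ 1, let β, γ : Fin p → ℝ with |γ_j| ≤ 2π for all j, and let ψ_p be the QAOA state after p rounds. Then p · 2π · ‖P₀H₁ − H₁P₀‖ ≥ |⟨ψ_p, P₀ψ_p⟩ − ⟨ψ₀, P₀ψ₀⟩|. Moreover the sharper bound (Σ_{j=1}^{p} |γ_j|) · ‖P₀H₁ − H₁P₀‖ ≥ |⟨ψ_p, P₀ψ_p⟩ − ⟨ψ₀, P₀ψ₀⟩| holds. -/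
open Matrix Complex
open scoped ComplexOrder

set_option maxHeartbeats 1000000
set_option synthInstance.maxHeartbeats 400000
set_option linter.unusedSectionVars false

namespace QaoaAux

open NormedSpace
open scoped InnerProductSpace

/-- `chainOp u p = u (p-1) * ⋯ * u 0`. -/
def chainOp {M : Type*} [Monoid M] (u : ℕ → M) : ℕ → M
  | 0 => 1
  | k + 1 => u k * chainOp u k

lemma ofFn_rev_prod {M : Type*} [Monoid M] (u : ℕ → M) :
    ∀ p : ℕ, (List.ofFn fun j : Fin p => u j.rev).prod = chainOp u p := by
  intro p
  induction p with
  | zero => simp [chainOp]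
  | succ p ih =>
    rw [List.ofFn_succ, List.prod_cons, chainOp, ← ih]
    have h1 : ((Fin.rev (0 : Fin (p + 1))) : ℕ) = p := by simp [Fin.rev]
    have h2 : ∀ j : Fin p, ((Fin.rev (Fin.succ j)) : ℕ) = ((Fin.rev j) : ℕ) := by
      intro j
      simp [Fin.rev]
    simp only [h1, h2]

section Hilbert

variable {E : Type*} [NormedAddCommGroup E] [InnerProductSpace ℂ E] [CompleteSpace E] [Nontrivial E]

lemma star_real_smul (A : E →L[ℂ] E) (hA : star A = -A) (t : ℝ) : star (t • A) = -(t • A) := by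
  rw [← algebraMap_smul ℂ t A, star_smul, hA]
  simp [smul_neg]

lemma exp_mul_exp_neg (A : E →L[ℂ] E) : exp A * exp (-A) = 1 := by
  rw [← NormedSpace.exp_add_of_commute_of_mem_ball (𝕂 := ℂ) (Commute.neg_right (Commute.refl A))
    (by simp [NormedSpace.expSeries_radius_eq_top]) (by simp [NormedSpace.expSeries_radius_eq_top]), add_neg_cancel, NormedSpace.exp_zero]

lemma star_exp_skew (A : E →L[ℂ] E) (hA : star A = -A) : star (exp A) = exp (-A) := by
  rw [star_exp, hA]

lemma norm_exp_skew (A : E →L[ℂ] E) (hA : star A = -A) : ‖exp A‖ = 1 := by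
  have h : star (exp A) * exp A = 1 := by
    rw [star_exp_skew A hA]
    have := exp_mul_exp_neg (-A)
    rwa [neg_neg] at this
  have h2 : ‖exp A‖ * ‖exp A‖ = 1 := by
    rw [← CStarRing.norm_star_mul_self, h, norm_one]
  nlinarith [norm_nonneg (exp A)]

lemma norm_conj_skew (A X : E →L[ℂ] E) (hA : star A = -A) :
    ‖exp A * X * exp (-A)‖ = ‖X‖ := by
  have hA' : star (-A) = -(-A) := by rw [star_neg, hA, neg_neg]
  have hu : ‖exp A‖ = 1 := norm_exp_skew A hA
  have hv : ‖exp (-A)‖ = 1 := norm_exp_skew (-A) hA'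
  refine le_antisymm ?_ ?_
  · calc ‖exp A * X * exp (-A)‖ ≤ ‖exp A * X‖ * ‖exp (-A)‖ := norm_mul_le _ _
      _ ≤ ‖exp A‖ * ‖X‖ * ‖exp (-A)‖ := by
          gcongr; exact norm_mul_le _ _
      _ = ‖X‖ := by rw [hu, hv, one_mul, mul_one]
  · have hX : X = exp (-A) * (exp A * X * exp (-A)) * exp A := by
      have h1 : exp (-A) * exp A = 1 := by
        have := exp_mul_exp_neg (-A); rwa [neg_neg] at this
      calc X = (exp (-A) * exp A) * X * (exp (-A) * exp A) := by
              rw [h1, one_mul, mul_one]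
        _ = exp (-A) * (exp A * X * exp (-A)) * exp A := by noncomm_ring
    calc ‖X‖ = ‖exp (-A) * (exp A * X * exp (-A)) * exp A‖ := by rw [← hX]
      _ ≤ ‖exp (-A) * (exp A * X * exp (-A))‖ * ‖exp A‖ := norm_mul_le _ _
      _ ≤ ‖exp (-A)‖ * ‖exp A * X * exp (-A)‖ * ‖exp A‖ := by
          gcongr; exact norm_mul_le _ _
      _ = ‖exp A * X * exp (-A)‖ := by rw [hu, hv, one_mul, mul_one]

/-- Key estimate: conjugating by the unitary `exp A` (with `A` skew-adjoint) moves `P`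
by at most the norm of the commutator. -/
lemma norm_exp_conj_sub_le (A P : E →L[ℂ] E) (hA : star A = -A) :
    ‖exp A * P * exp (-A) - P‖ ≤ ‖A * P - P * A‖ := by
  have hexp : (NormedSpace.exp : (E →L[ℂ] E) → _) = NormedSpace.exp := rfl
  set C : E →L[ℂ] E := A * P - P * A with hC
  set f : ℝ → (E →L[ℂ] E) := fun t => exp (t • A) * P * exp (t • (-A)) with hfdef
  set f' : ℝ → (E →L[ℂ] E) := fun t => exp (t • A) * C * exp (t • (-A)) with hf'def
  have hf : ∀ t ∈ Set.Icc (0:ℝ) 1, HasDerivWithinAt f (f' t) (Set.Icc (0:ℝ) 1) t := by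
    intro t _
    have d1 : HasDerivAt (fun u : ℝ => exp (u • A)) (exp (t • A) * A) t :=
      hasDerivAt_exp_smul_const A t
    have d2 : HasDerivAt (fun u : ℝ => exp (u • (-A))) (exp (t • (-A)) * (-A)) t :=
      hasDerivAt_exp_smul_const (-A) t
    have d3 := (d1.mul_const P).mul d2
    have heq : f' t = exp (t • A) * A * P * exp (t • (-A)) +
        exp (t • A) * P * (exp (t • (-A)) * (-A)) := by
      have hcomm : A * exp (t • (-A)) = exp (t • (-A)) * A :=
        (((Commute.refl A).neg_right).smul_right t).exp_right
      have h2 : exp (t • (-A)) * (-A) = -(A * exp (t • (-A))) := by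
        rw [mul_neg, ← hcomm]
      rw [h2, hf'def, hC]
      noncomm_ring
    rw [heq]
    exact d3.hasDerivWithinAt
  have bound : ∀ t ∈ Set.Ico (0:ℝ) 1, ‖f' t‖ ≤ ‖C‖ := by
    intro t _
    have hskew : star (t • A) = -(t • A) := star_real_smul A hA t
    have : f' t = exp (t • A) * C * exp (-(t • A)) := by
      simp only [hf'def, hexp, smul_neg]
    rw [this, norm_conj_skew _ _ hskew]
  have key := norm_image_sub_le_of_norm_deriv_le_segment_01' hf bound
  have hf1 : f 1 = exp A * P * exp (-A) := by
    simp only [hfdef, one_smul, hexp]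
  have hf0 : f 0 = P := by
    simp only [hfdef, zero_smul, NormedSpace.exp_zero, one_mul, mul_one]
  rwa [hf1, hf0] at key

lemma norm_isometry_of_star_mul_self (u : E →L[ℂ] E) (h : star u * u = 1) (ψ : E) :
    ‖u ψ‖ = ‖ψ‖ := by
  have hinner : ⟪u ψ, u ψ⟫_ℂ = ⟪ψ, ψ⟫_ℂ := by
    rw [← ContinuousLinearMap.adjoint_inner_right, ← ContinuousLinearMap.star_eq_adjoint,
      ← ContinuousLinearMap.mul_apply, h, ContinuousLinearMap.one_apply]
  rw [inner_self_eq_norm_sq_to_K, inner_self_eq_norm_sq_to_K] at hinner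
  have h2 : ‖u ψ‖ ^ 2 = ‖ψ‖ ^ 2 := by exact_mod_cast hinner
  nlinarith [norm_nonneg (u ψ), norm_nonneg ψ]

/-- The exponent coefficient `-(r : ℂ) * I` conjugates to its negation. -/
lemma skew_coeff (H : E →L[ℂ] E) (hH : star H = H) (r : ℝ) :
    star ((-(r : ℂ) * Complex.I) • H) = -((-(r : ℂ) * Complex.I) • H) := by
  rw [star_smul, hH, ← neg_smul]
  congr 1
  simp [Complex.ext_iff]

/-- One phase-separation step changes the expectation of `P` by at most `|γ| ‖[P,H]‖`. -/
lemma phase_step (H P : E →L[ℂ] E) (hH : star H = H) (γ : ℝ) (ψ : E) (hψ : ‖ψ‖ = 1) :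
    ‖⟪exp ((-(γ : ℂ) * Complex.I) • H) ψ,
        P (exp ((-(γ : ℂ) * Complex.I) • H) ψ)⟫_ℂ - ⟪ψ, P ψ⟫_ℂ‖ ≤
      |γ| * ‖P * H - H * P‖ := by
  set A : E →L[ℂ] E := (-(γ : ℂ) * Complex.I) • H with hAdef
  have hA : star A = -A := skew_coeff H hH γ
  set u : E →L[ℂ] E := exp A with hudef
  have hstar : star u = exp (-A) := star_exp_skew A hA
  have h1 : ⟪u ψ, P (u ψ)⟫_ℂ = ⟪ψ, (star u * P * u) ψ⟫_ℂ := by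
    rw [ContinuousLinearMap.mul_apply, ContinuousLinearMap.mul_apply,
      ContinuousLinearMap.star_eq_adjoint, ContinuousLinearMap.adjoint_inner_right]
  have h2 : ⟪u ψ, P (u ψ)⟫_ℂ - ⟪ψ, P ψ⟫_ℂ = ⟪ψ, ((star u * P * u) - P) ψ⟫_ℂ := by
    rw [h1, ContinuousLinearMap.sub_apply, inner_sub_right]
  rw [h2]
  have hb1 : ‖⟪ψ, ((star u * P * u) - P) ψ⟫_ℂ‖ ≤ ‖((star u * P * u) - P) ψ‖ := by
    have := norm_inner_le_norm (𝕜 := ℂ) ψ (((star u * P * u) - P) ψ)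
    rwa [hψ, one_mul] at this
  have hb2 : ‖((star u * P * u) - P) ψ‖ ≤ ‖(star u * P * u) - P‖ := by
    have := ContinuousLinearMap.le_opNorm ((star u * P * u) - P) ψ
    rwa [hψ, mul_one] at this
  have hA' : star (-A) = -(-A) := by rw [star_neg, hA, neg_neg]
  have hb3 : ‖(star u * P * u) - P‖ ≤ ‖(-A) * P - P * (-A)‖ := by
    have : star u * P * u = exp (-A) * P * exp (-(-A)) := by
      rw [hstar, neg_neg, hudef]
    rw [this]
    exact norm_exp_conj_sub_le (-A) P hA'
  have hb4 : ‖(-A) * P - P * (-A)‖ = |γ| * ‖P * H - H * P‖ := by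
    have hnegA : -A = ((γ : ℂ) * Complex.I) • H := by
      rw [hAdef, ← neg_smul]
      congr 1
      ring
    have : (-A) * P - P * (-A) = ((γ : ℂ) * Complex.I) • (H * P - P * H) := by
      rw [hnegA, smul_mul_assoc, mul_smul_comm, ← smul_sub]
    rw [this, norm_smul, ← neg_sub, norm_neg]
    congr 1
    rw [norm_mul, Complex.norm_I, mul_one, Complex.norm_real, Real.norm_eq_abs]
  calc ‖⟪ψ, ((star u * P * u) - P) ψ⟫_ℂ‖ ≤ ‖((star u * P * u) - P) ψ‖ := hb1
    _ ≤ ‖(star u * P * u) - P‖ := hb2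
    _ ≤ ‖(-A) * P - P * (-A)‖ := hb3
    _ = |γ| * ‖P * H - H * P‖ := hb4

/-- The mixer step leaves the expectation of `P` unchanged when `P` commutes with `H`. -/
lemma mixer_step (H P : E →L[ℂ] E) (hH : star H = H) (hc : P * H = H * P) (β : ℝ) (ψ : E) :
    ⟪exp ((-(β : ℂ) * Complex.I) • H) ψ,
        P (exp ((-(β : ℂ) * Complex.I) • H) ψ)⟫_ℂ = ⟪ψ, P ψ⟫_ℂ := by
  set A : E →L[ℂ] E := (-(β : ℂ) * Complex.I) • H with hAdef
  have hA : star A = -A := skew_coeff H hH β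
  set u : E →L[ℂ] E := exp A with hudef
  have hstar : star u = exp (-A) := star_exp_skew A hA
  have h1 : ⟪u ψ, P (u ψ)⟫_ℂ = ⟪ψ, (star u * P * u) ψ⟫_ℂ := by
    rw [ContinuousLinearMap.mul_apply, ContinuousLinearMap.mul_apply,
      ContinuousLinearMap.star_eq_adjoint, ContinuousLinearMap.adjoint_inner_right]
  have hPu : P * u = u * P := by
    have hPA : Commute P A := by
      apply Commute.smul_right
      exact hc
    exact (hPA.exp_right)
  have h2 : star u * P * u = P := by
    rw [mul_assoc, hPu, ← mul_assoc, hstar, hudef]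
    have : exp (-A) * exp A = 1 := by
      have := exp_mul_exp_neg (-A); rwa [neg_neg] at this
    rw [this, one_mul]
  rw [h1, h2]

/-- The single QAOA round operator. -/
noncomputable def uOp (h0 h1 : E →L[ℂ] E) (β γ : ℕ → ℝ) (k : ℕ) : E →L[ℂ] E :=
  exp ((-(β k : ℂ) * Complex.I) • h0) * exp ((-(γ k : ℂ) * Complex.I) • h1)

lemma chain_bound (h0 h1 P : E →L[ℂ] E) (hh0 : star h0 = h0) (hh1 : star h1 = h1)
    (hc : P * h0 = h0 * P) (β γ : ℕ → ℝ) (ψ : E) (hψ : ‖ψ‖ = 1) (p : ℕ) :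
    ‖chainOp (uOp h0 h1 β γ) p ψ‖ = 1 ∧
      ‖⟪chainOp (uOp h0 h1 β γ) p ψ, P (chainOp (uOp h0 h1 β γ) p ψ)⟫_ℂ - ⟪ψ, P ψ⟫_ℂ‖ ≤
        (∑ j ∈ Finset.range p, |γ j|) * ‖P * h1 - h1 * P‖ := by
  induction p with
  | zero =>
    constructor
    · simpa [chainOp] using hψ
    · simp [chainOp]
  | succ p ih =>
    obtain ⟨ihnorm, ihbound⟩ := ih
    set W := chainOp (uOp h0 h1 β γ) p with hW
    set φ := W ψ with hφ
    set Am : E →L[ℂ] E := (-(β p : ℂ) * Complex.I) • h0 with hAm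
    set Av : E →L[ℂ] E := (-(γ p : ℂ) * Complex.I) • h1 with hAv
    have hAms : star Am = -Am := skew_coeff h0 hh0 (β p)
    have hAvs : star Av = -Av := skew_coeff h1 hh1 (γ p)
    have happ : chainOp (uOp h0 h1 β γ) (p + 1) ψ = exp Am (exp Av φ) := by
      show (uOp h0 h1 β γ p * W) ψ = _
      rw [ContinuousLinearMap.mul_apply, uOp, ContinuousLinearMap.mul_apply]
    have hisom : ∀ (A : E →L[ℂ] E), star A = -A → ∀ x : E, ‖exp A x‖ = ‖x‖ := by
      intro A hA x
      apply norm_isometry_of_star_mul_self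
      rw [star_exp_skew A hA]
      have := exp_mul_exp_neg (-A); rwa [neg_neg] at this
    have hnorm : ‖chainOp (uOp h0 h1 β γ) (p + 1) ψ‖ = 1 := by
      rw [happ, hisom Am hAms, hisom Av hAvs]
      exact ihnorm
    refine ⟨hnorm, ?_⟩
    have hmix : ⟪exp Am (exp Av φ), P (exp Am (exp Av φ))⟫_ℂ =
        ⟪exp Av φ, P (exp Av φ)⟫_ℂ := mixer_step h0 P hh0 hc (β p) (exp Av φ)
    have hφnorm : ‖φ‖ = 1 := ihnorm
    have hstep : ‖⟪exp Av φ, P (exp Av φ)⟫_ℂ - ⟪φ, P φ⟫_ℂ‖ ≤ |γ p| * ‖P * h1 - h1 * P‖ :=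
      phase_step h1 P hh1 (γ p) φ hφnorm
    rw [happ, hmix]
    calc ‖⟪exp Av φ, P (exp Av φ)⟫_ℂ - ⟪ψ, P ψ⟫_ℂ‖
        ≤ ‖⟪exp Av φ, P (exp Av φ)⟫_ℂ - ⟪φ, P φ⟫_ℂ‖ + ‖⟪φ, P φ⟫_ℂ - ⟪ψ, P ψ⟫_ℂ‖ := by
          have := norm_sub_le_norm_sub_add_norm_sub
            (⟪exp Av φ, P (exp Av φ)⟫_ℂ) (⟪φ, P φ⟫_ℂ) (⟪ψ, P ψ⟫_ℂ)
          exact this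
      _ ≤ |γ p| * ‖P * h1 - h1 * P‖ + (∑ j ∈ Finset.range p, |γ j|) * ‖P * h1 - h1 * P‖ := by
          gcongr
      _ = (∑ j ∈ Finset.range (p + 1), |γ j|) * ‖P * h1 - h1 * P‖ := by
          rw [Finset.sum_range_succ]; ring

end Hilbert

end QaoaAux

open QaoaAux NormedSpace
open scoped InnerProductSpace

/-- lower bound on the change of the expectation of a projector `P₀` commuting
with the mixer, in terms of the phase angles and commutator norm. -/
theorem qaoa_projector_overlap_change_bound
    {N : ℕ} (hN : 1 ≤ N) (H0 H1 : Matrix (Fin N) (Fin N) ℂ)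
    (hH0 : H0.PosSemidef) (hH1 : H1.PosSemidef)
    (P0 : Matrix (Fin N) (Fin N) ℂ)
    (hP0herm : P0.IsHermitian) (hP0idem : P0 * P0 = P0)
    (hP0comm : P0 * H0 = H0 * P0)
    (ψ0 : Fin N → ℂ) (hψ0 : star ψ0 ⬝ᵥ ψ0 = 1) (hground : H0 *ᵥ ψ0 = 0)
    (p : ℕ) (hp : 1 ≤ p) (β γ : Fin p → ℝ)
    (hγ : ∀ j, |γ j| ≤ 2 * Real.pi)
    (ψp : Fin N → ℂ) (hψp : ψp = qaoaState H0 H1 p β γ ψ0) :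
    (p : ℝ) * (2 * Real.pi) * specNorm (P0 * H1 - H1 * P0) ≥
        |(star ψp ⬝ᵥ (P0 *ᵥ ψp)).re - (star ψ0 ⬝ᵥ (P0 *ᵥ ψ0)).re| ∧
      (∑ j, |γ j|) * specNorm (P0 * H1 - H1 * P0) ≥
        |(star ψp ⬝ᵥ (P0 *ᵥ ψp)).re - (star ψ0 ⬝ᵥ (P0 *ᵥ ψ0)).re| := by
  haveI : NeZero N := ⟨by omega⟩
  haveI : Nontrivial (EuclideanSpace ℂ (Fin N)) := by infer_instance
  set T := Matrix.toEuclideanCLM (𝕜 := ℂ) (n := Fin N) with hT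
  set e : (Fin N → ℂ) → EuclideanSpace ℂ (Fin N) := ⇑(WithLp.equiv 2 (Fin N → ℂ)).symm with he
  have hTcont : Continuous T := by
    exact LinearMap.continuous_of_finiteDimensional
      ({ toFun := T, map_add' := map_add T,
         map_smul' := fun c M => _root_.map_smul T c M } : Matrix (Fin N) (Fin N) ℂ →ₗ[ℂ] _)
  have hTexp : ∀ M : Matrix (Fin N) (Fin N) ℂ, T (exp M) = exp (T M) := by
    set Tl : Matrix (Fin N) (Fin N) ℂ ≃ₗ[ℂ]
        (EuclideanSpace ℂ (Fin N) →L[ℂ] EuclideanSpace ℂ (Fin N)) :=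
      { toFun := T, invFun := T.symm, map_add' := map_add T,
        map_smul' := fun c M => _root_.map_smul T c M,
        left_inv := fun M => T.symm_apply_apply M,
        right_inv := fun X => T.apply_symm_apply X } with hTl
    set Tcle := Tl.toContinuousLinearEquiv with hTcle
    intro M
    have hco : ∀ X : Matrix (Fin N) (Fin N) ℂ, Tcle X = T X := fun _ => rfl
    calc T (exp M) = Tcle (exp M) := (hco _).symm
      _ = Tcle (∑' n : ℕ, ((n.factorial : ℂ))⁻¹ • M ^ n) := by rw [exp_eq_tsum ℂ]
      _ = ∑' n : ℕ, Tcle (((n.factorial : ℂ))⁻¹ • M ^ n) := Tcle.map_tsum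
      _ = ∑' n : ℕ, ((n.factorial : ℂ))⁻¹ • (T M) ^ n := by
          refine tsum_congr fun n => ?_
          rw [hco, _root_.map_smul, map_pow]
      _ = exp (T M) := by rw [exp_eq_tsum ℂ]
  set β' : ℕ → ℝ := fun k => if h : k < p then β ⟨k, h⟩ else 0 with hβ'
  set γ' : ℕ → ℝ := fun k => if h : k < p then γ ⟨k, h⟩ else 0 with hγ'
  set h0 := T H0 with hh0def
  set h1 := T H1 with hh1def
  set P := T P0 with hPdef
  set Mstep : ℕ → Matrix (Fin N) (Fin N) ℂ := fun k =>
    exp ((-(β' k : ℂ) * Complex.I) • H0) * exp ((-(γ' k : ℂ) * Complex.I) • H1)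
    with hMstep
  have hfun : (fun j : Fin p => exp ((-(β j.rev : ℂ) * Complex.I) • H0) *
      exp ((-(γ j.rev : ℂ) * Complex.I) • H1)) = fun j : Fin p => Mstep (j.rev : ℕ) := by
    funext j
    have hlt := j.rev.isLt
    simp only [hMstep, hβ', hγ', dif_pos hlt, Fin.eta]
  have hqaoa : ψp = (chainOp Mstep p).mulVec ψ0 := by
    rw [hψp, qaoaState, hfun, ofFn_rev_prod]
  have hTstep : ∀ k, T (Mstep k) = uOp h0 h1 β' γ' k := by
    intro k
    rw [hMstep]
    simp only
    rw [_root_.map_mul, hTexp, hTexp, _root_.map_smul, _root_.map_smul, uOp, hh0def, hh1def]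
  have hTchain : ∀ k, T (chainOp Mstep k) = chainOp (uOp h0 h1 β' γ') k := by
    intro k
    induction k with
    | zero => simp [chainOp, _root_.map_one]
    | succ k ih =>
      rw [chainOp, chainOp, _root_.map_mul, ih, hTstep]
  have happly : ∀ (M : Matrix (Fin N) (Fin N) ℂ) (x : Fin N → ℂ),
      e (M.mulVec x) = T M (e x) := by
    intro M x
    rw [hT, he, WithLp.equiv_symm_apply, Matrix.toEuclideanCLM_toLp]
  have hexpect : ∀ v : Fin N → ℂ, star v ⬝ᵥ (P0 *ᵥ v) = ⟪e v, P (e v)⟫_ℂ := by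
    intro v
    rw [← happly, he]
    rw [WithLp.equiv_symm_apply, EuclideanSpace.inner_toLp_toLp, dotProduct_comm]
  have hn : ‖e ψ0‖ = 1 := by
    have h1 : ⟪e ψ0, e ψ0⟫_ℂ = 1 := by
      rw [he, WithLp.equiv_symm_apply, EuclideanSpace.inner_toLp_toLp, dotProduct_comm]; exact hψ0
    rw [inner_self_eq_norm_sq_to_K] at h1
    have h2 : ‖e ψ0‖ ^ 2 = 1 := by
      have h3 : ((‖e ψ0‖ ^ 2 : ℝ) : ℂ) = ((1 : ℝ) : ℂ) := by push_cast; simpa using h1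
      exact_mod_cast h3
    nlinarith [norm_nonneg (e ψ0)]
  have hsa0 : star h0 = h0 := by
    rw [hh0def, ← map_star T, Matrix.star_eq_conjTranspose, hH0.1]
  have hsa1 : star h1 = h1 := by
    rw [hh1def, ← map_star T, Matrix.star_eq_conjTranspose, hH1.1]
  have hcP : P * h0 = h0 * P := by
    rw [hPdef, hh0def, ← _root_.map_mul, ← _root_.map_mul, hP0comm]
  obtain ⟨-, hbound⟩ := chain_bound h0 h1 P hsa0 hsa1 hcP β' γ' (e ψ0) hn p
  have hstate : e ψp = chainOp (uOp h0 h1 β' γ') p (e ψ0) := by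
    rw [hqaoa, happly, hTchain]
  have hsn : specNorm (P0 * H1 - H1 * P0) = ‖P * h1 - h1 * P‖ := by
    rw [specNorm]
    congr 1
    rw [map_sub, _root_.map_mul, _root_.map_mul, ← hT, ← hPdef, ← hh1def]
  have hre : |(star ψp ⬝ᵥ (P0 *ᵥ ψp)).re - (star ψ0 ⬝ᵥ (P0 *ᵥ ψ0)).re| ≤
      ‖(star ψp ⬝ᵥ (P0 *ᵥ ψp)) - (star ψ0 ⬝ᵥ (P0 *ᵥ ψ0))‖ := by
    rw [← Complex.sub_re]
    exact Complex.abs_re_le_norm _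
  have key : |(star ψp ⬝ᵥ (P0 *ᵥ ψp)).re - (star ψ0 ⬝ᵥ (P0 *ᵥ ψ0)).re| ≤
      (∑ j ∈ Finset.range p, |γ' j|) * ‖P * h1 - h1 * P‖ := by
    refine hre.trans ?_
    rw [hexpect ψp, hexpect ψ0, hstate]
    exact hbound
  have hsum : ∑ j ∈ Finset.range p, |γ' j| = ∑ j, |γ j| := by
    rw [← Fin.sum_univ_eq_sum_range (fun k => |γ' k|) p]
    refine Finset.sum_congr rfl fun j _ => ?_
    simp only [hγ', dif_pos j.isLt, Fin.eta]
  have hnn : (0 : ℝ) ≤ ‖P * h1 - h1 * P‖ := norm_nonneg _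
  constructor
  · rw [ge_iff_le, hsn]
    refine key.trans ?_
    refine mul_le_mul_of_nonneg_right ?_ hnn
    rw [hsum]
    calc ∑ j, |γ j| ≤ ∑ _j : Fin p, 2 * Real.pi := Finset.sum_le_sum fun j _ => hγ j
      _ = (p : ℝ) * (2 * Real.pi) := by
          rw [Finset.sum_const, Finset.card_univ, Fintype.card_fin, nsmul_eq_mul]
  · rw [ge_iff_le, hsn, ← hsum]
    exact key
end

section
/- Let N ≥ 2 and S ⊆ Fin N with m = |S| satisfying 1 ≤ m ≤ N − 1. Let H₁ = I − H_C where H_C is the diagonal matrix with diagonal entries 1 for z ∈ S and 0 otherwise. Let H₀ be any N×N Hermitian positive-semidefinite matrix whose ground state is the uniform unit vector ψ₀ (all entries 1/√N) with H₀ψ₀ = 0. Let p ≥ 1, let β, γ : Fin p → ℝ with |γ_j| ≤ 2π for all j, let ψ_p be the QAOA state after p rounds, and let λ = Σ_{z ∈ S} |ψ_p(z)|². Then p · 2π · √(m(N − m)) ≥ λ(N − 2m) + m − 2√(λ(1 − λ) m (N − m)). -/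
open Matrix Complex
open scoped ComplexOrder

set_option maxHeartbeats 1000000

section QaoaHelpers

variable {n : ℕ}

/-- If `v` is in the kernel of `M`, then `exp M` fixes `v`. -/
lemma exp_mulVec_eq_self (M : Matrix (Fin n) (Fin n) ℂ) (v : Fin n → ℂ)
    (h : M *ᵥ v = 0) : NormedSpace.exp M *ᵥ v = v := by
  letI : SeminormedRing (Matrix (Fin n) (Fin n) ℂ) := Matrix.linftyOpSemiNormedRing
  letI : NormedRing (Matrix (Fin n) (Fin n) ℂ) := Matrix.linftyOpNormedRing
  letI : NormedAlgebra ℂ (Matrix (Fin n) (Fin n) ℂ) := Matrix.linftyOpNormedAlgebra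
  have hsum : Summable (fun k : ℕ => ((k.factorial : ℂ))⁻¹ • M ^ k) :=
    NormedSpace.expSeries_summable' (𝕂 := ℂ) M
  let l0 : Matrix (Fin n) (Fin n) ℂ →ₗ[ℂ] (Fin n → ℂ) :=
    { toFun := fun A => A *ᵥ v
      map_add' := fun A B => Matrix.add_mulVec A B v
      map_smul' := fun c A => Matrix.smul_mulVec c A v }
  let l : Matrix (Fin n) (Fin n) ℂ →L[ℂ] (Fin n → ℂ) := LinearMap.toContinuousLinearMap l0
  have hl : NormedSpace.exp M *ᵥ v = l (∑' k : ℕ, ((k.factorial : ℂ))⁻¹ • M ^ k) := by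
    rw [NormedSpace.exp_eq_tsum ℂ]
    rfl
  rw [hl, ContinuousLinearMap.map_tsum l hsum]
  have hterm : ∀ k : ℕ, l (((k.factorial : ℂ))⁻¹ • M ^ k) =
      ((k.factorial : ℂ))⁻¹ • (M ^ k *ᵥ v) := by
    intro k; simp [l, l0]
  rw [tsum_eq_single 0]
  · rw [hterm 0]
    simp [Matrix.one_mulVec]
  · intro k hk
    obtain ⟨j, rfl⟩ := Nat.exists_eq_succ_of_ne_zero hk
    rw [hterm, pow_succ, ← Matrix.mulVec_mulVec, h, Matrix.mulVec_zero, smul_zero]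

/-- `exp(-i t H)` is unitary for Hermitian `H`. -/
lemma exp_skew_unitary (H : Matrix (Fin n) (Fin n) ℂ) (hH : H.IsHermitian) (t : ℝ) :
    (NormedSpace.exp ((-(t : ℂ) * Complex.I) • H))ᴴ *
      NormedSpace.exp ((-(t : ℂ) * Complex.I) • H) = 1 := by
  have harg : ((-(t : ℂ) * Complex.I) • H)ᴴ = (((t : ℂ)) * Complex.I) • H := by
    rw [Matrix.conjTranspose_smul, hH.eq]
    congr 1
    simp [Complex.conj_I]
  rw [← Matrix.exp_conjTranspose, harg, ← Matrix.exp_add_of_commute]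
  · have : ((t : ℂ) * Complex.I) • H + (-(t : ℂ) * Complex.I) • H = (0 : ℂ) • H := by
      rw [← add_smul]; ring_nf
    rw [this, zero_smul, NormedSpace.exp_zero]
  · show _ * _ = _ * _
    rw [Matrix.smul_mul, Matrix.mul_smul, Matrix.smul_mul, Matrix.mul_smul, smul_smul, smul_smul,
      mul_comm]

lemma dot_self_mulVec (A : Matrix (Fin n) (Fin n) ℂ) (hA : Aᴴ * A = 1) (x : Fin n → ℂ) :
    star (A *ᵥ x) ⬝ᵥ (A *ᵥ x) = star x ⬝ᵥ x := by
  rw [Matrix.star_mulVec, dotProduct_mulVec, Matrix.vecMul_vecMul, hA, Matrix.vecMul_one]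

lemma ofReal_sum_sq_abs (w : Fin n → ℂ) :
    ((∑ z, ‖w z‖ ^ 2 : ℝ) : ℂ) = star w ⬝ᵥ w := by
  rw [dotProduct]
  push_cast
  refine Finset.sum_congr rfl fun z _ => ?_
  have h1 : (starRingEnd ℂ) (w z) * w z = ((Complex.normSq (w z) : ℝ) : ℂ) := by
    rw [mul_comm, Complex.mul_conj]
  rw [Pi.star_apply, Complex.star_def, h1, ← Complex.ofReal_pow, Complex.sq_norm]

lemma sum_sq_abs_eq_of_dot_eq (x y : Fin n → ℂ) (h : star x ⬝ᵥ x = star y ⬝ᵥ y) :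
    ∑ z, ‖x z‖ ^ 2 = ∑ z, ‖y z‖ ^ 2 := by
  have hx := ofReal_sum_sq_abs x
  have hy := ofReal_sum_sq_abs y
  rw [h, ← hy] at hx
  exact_mod_cast hx

lemma abs_exp_I_sub_one (θ : ℝ) :
    ‖Complex.exp ((θ : ℂ) * Complex.I) - 1‖ ≤ |θ| := by
  have hre : (Complex.exp ((θ : ℂ) * Complex.I) - 1).re = Real.cos θ - 1 := by
    simp [Complex.exp_ofReal_mul_I_re]
  have him : (Complex.exp ((θ : ℂ) * Complex.I) - 1).im = Real.sin θ := by
    simp [Complex.exp_ofReal_mul_I_im]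
  have hsq : ‖Complex.exp ((θ : ℂ) * Complex.I) - 1‖ ^ 2 = 2 - 2 * Real.cos θ := by
    rw [Complex.sq_norm, Complex.normSq_apply, hre, him]
    nlinarith [Real.sin_sq_add_cos_sq θ]
  have hcos : 1 - Real.cos θ ≤ θ ^ 2 / 2 := by
    have h1 : Real.sin (θ / 2) ^ 2 = 1 / 2 - Real.cos (2 * (θ / 2)) / 2 :=
      Real.sin_sq_eq_half_sub (θ / 2)
    rw [show 2 * (θ / 2) = θ by ring] at h1
    have h2 : |Real.sin (θ / 2)| ≤ |θ / 2| := Real.abs_sin_le_abs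
    have h3 : Real.sin (θ / 2) ^ 2 ≤ (θ / 2) ^ 2 := by
      rw [← _root_.sq_abs (Real.sin (θ / 2)), ← _root_.sq_abs (θ / 2)]
      exact pow_le_pow_left₀ (abs_nonneg _) h2 2
    nlinarith
  have h0 : (0 : ℝ) ≤ ‖Complex.exp ((θ : ℂ) * Complex.I) - 1‖ :=
    norm_nonneg _
  have hfin : ‖Complex.exp ((θ : ℂ) * Complex.I) - 1‖ ^ 2 ≤ |θ| ^ 2 := by
    rw [hsq, _root_.sq_abs]
    nlinarith
  exact (pow_le_pow_iff_left₀ h0 (abs_nonneg θ) two_ne_zero).mp hfin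

/-- The main per-step inequality on the squared overlap. -/
lemma step_ineq (q r e : ℂ) (u w mr nr K γa : ℝ)
    (he : ‖e‖ = 1) (he1 : ‖e - 1‖ ≤ γa) (hγa : 0 ≤ γa)
    (hq : ‖q‖ ^ 2 ≤ mr * u) (hr : ‖r‖ ^ 2 ≤ nr * w)
    (hu : 0 ≤ u) (hw : 0 ≤ w) (huw : u + w = 1) (hmr : 0 ≤ mr) (hnr : 0 ≤ nr)
    (hK : K = Real.sqrt (mr * nr)) :
    Complex.normSq (q + r) - γa * K ≤ Complex.normSq (q + e * r) := by
  have h1 : Complex.normSq (q + e * r) =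
      Complex.normSq q + Complex.normSq r + 2 * (q * (starRingEnd ℂ) (e * r)).re := by
    rw [Complex.normSq_add, Complex.normSq_mul]
    have : Complex.normSq e = 1 := by
      rw [← Complex.sq_norm, he]; norm_num
    rw [this, one_mul]
  have h2 : Complex.normSq (q + r) =
      Complex.normSq q + Complex.normSq r + 2 * (q * (starRingEnd ℂ) r).re := Complex.normSq_add q r
  have hdiff : (q * (starRingEnd ℂ) (e * r)).re - (q * (starRingEnd ℂ) r).re =
      (q * (starRingEnd ℂ) r * ((starRingEnd ℂ) e - 1)).re := by
    rw [← Complex.sub_re]; congr 1; rw [_root_.map_mul]; ring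
  have habs : ‖q * (starRingEnd ℂ) r * ((starRingEnd ℂ) e - 1)‖ =
      ‖q‖ * ‖r‖ * ‖e - 1‖ := by
    rw [norm_mul, norm_mul, Complex.norm_conj]
    congr 1
    have h2 : (starRingEnd ℂ) e - 1 = (starRingEnd ℂ) (e - 1) := by
      simp
    rw [h2, Complex.norm_conj]
  have hKnonneg : 0 ≤ K := hK ▸ Real.sqrt_nonneg _
  have hqr : 2 * (‖q‖ * ‖r‖) ≤ K := by
    have h2qr0 : (0 : ℝ) ≤ 2 * (‖q‖ * ‖r‖) := by positivity
    have hA : (2 * (‖q‖ * ‖r‖)) ^ 2 ≤ mr * nr := by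
      have hmul : (‖q‖ ^ 2) * (‖r‖ ^ 2) ≤ (mr * u) * (nr * w) :=
        mul_le_mul hq hr (sq_nonneg _) (by positivity)
      have key : 4 * (u * w) ≤ 1 := by nlinarith [sq_nonneg (u - w)]
      have step1 : (2 * (‖q‖ * ‖r‖)) ^ 2 =
          4 * ((‖q‖ ^ 2) * (‖r‖ ^ 2)) := by ring
      have step3 : 4 * ((mr * u) * (nr * w)) = (mr * nr) * (4 * (u * w)) := by ring
      have step4 : (mr * nr) * (4 * (u * w)) ≤ (mr * nr) * 1 :=
        mul_le_mul_of_nonneg_left key (mul_nonneg hmr hnr)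
      nlinarith
    have hK2 : K ^ 2 = mr * nr := by
      rw [hK, Real.sq_sqrt (by positivity)]
    exact (pow_le_pow_iff_left₀ h2qr0 hKnonneg two_ne_zero).mp (by rw [hK2]; exact hA)
  have hcross : -(γa * K) ≤ 2 * ((q * (starRingEnd ℂ) r * ((starRingEnd ℂ) e - 1)).re) := by
    have hb := Complex.abs_re_le_norm (q * (starRingEnd ℂ) r * ((starRingEnd ℂ) e - 1))
    have hb' : -(‖q‖ * ‖r‖ * ‖e - 1‖) ≤
        (q * (starRingEnd ℂ) r * ((starRingEnd ℂ) e - 1)).re := by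
      rw [← habs]
      have := neg_abs_le ((q * (starRingEnd ℂ) r * ((starRingEnd ℂ) e - 1)).re)
      linarith [hb, this]
    have hprod : 2 * (‖q‖ * ‖r‖ * ‖e - 1‖) ≤ γa * K := by
      have h2qr : 0 ≤ 2 * (‖q‖ * ‖r‖) := by positivity
      calc 2 * (‖q‖ * ‖r‖ * ‖e - 1‖)
          = (2 * (‖q‖ * ‖r‖)) * ‖e - 1‖ := by ring
        _ ≤ K * γa := mul_le_mul hqr he1 (norm_nonneg _) hKnonneg
        _ = γa * K := mul_comm _ _
    linarith
  linarith [h1, h2, hdiff, hcross]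

end QaoaHelpers

section QaoaMain

open Matrix Complex

variable {N : ℕ}

lemma uniform_dot (hN : 0 < N) (ψ0 : Fin N → ℂ)
    (hψ0 : ψ0 = fun _ => ((Real.sqrt N)⁻¹ : ℂ)) (x : Fin N → ℂ) :
    star ψ0 ⬝ᵥ x = ((Real.sqrt N)⁻¹ : ℂ) * ∑ z, x z := by
  rw [dotProduct, Finset.mul_sum]
  refine Finset.sum_congr rfl fun z _ => ?_
  rw [hψ0, Pi.star_apply, Complex.star_def, map_inv₀, Complex.conj_ofReal]

lemma sqrtN_inv_sq (hN : 0 < N) : ((Real.sqrt N)⁻¹) ^ 2 = (N : ℝ)⁻¹ := by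
  rw [← Real.sqrt_inv]
  exact Real.sq_sqrt (by positivity)

lemma abs_c_sq (hN : 0 < N) :
    ‖(((Real.sqrt N : ℝ) : ℂ))⁻¹‖ ^ 2 = (N : ℝ)⁻¹ := by
  rw [norm_inv, Complex.norm_real, Real.norm_eq_abs, _root_.abs_of_nonneg (Real.sqrt_nonneg _), inv_pow,
    Real.sq_sqrt (by positivity : (0 : ℝ) ≤ (N : ℝ))]

lemma cauchy_schwarz_subset (T : Finset (Fin N)) (x : Fin N → ℂ) :
    ‖∑ z ∈ T, x z‖ ^ 2 ≤ (T.card : ℝ) * ∑ z ∈ T, ‖x z‖ ^ 2 := by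
  have h1 : ‖∑ z ∈ T, x z‖ ≤ ∑ z ∈ T, ‖x z‖ :=
    norm_sum_le T x
  have h2 : (∑ z ∈ T, ‖x z‖) ^ 2 ≤
      (∑ z ∈ T, (1 : ℝ) ^ 2) * ∑ z ∈ T, ‖x z‖ ^ 2 := by
    have := Finset.sum_mul_sq_le_sq_mul_sq T (fun _ => (1 : ℝ)) (fun z => ‖x z‖)
    simpa using this
  have h3 : (∑ z ∈ T, (1 : ℝ) ^ 2) = (T.card : ℝ) := by simp
  calc ‖∑ z ∈ T, x z‖ ^ 2 ≤ (∑ z ∈ T, ‖x z‖) ^ 2 :=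
        pow_le_pow_left₀ (norm_nonneg _) h1 2
    _ ≤ (T.card : ℝ) * ∑ z ∈ T, ‖x z‖ ^ 2 := by rw [← h3]; exact h2

/-- Main inductive lemma: the QAOA state stays normalized and its overlap with the
uniform state decays by at most `|γ j| √(m (N - m)) / N` per round. -/
lemma qaoa_induction (hN : 0 < N) (S : Finset (Fin N))
    (H0 H1 : Matrix (Fin N) (Fin N) ℂ) (hH0 : H0.PosSemidef)
    (hH1 : H1 = Matrix.diagonal (fun z => if z ∈ S then (0 : ℂ) else 1))
    (ψ0 : Fin N → ℂ) (hψ0 : ψ0 = fun _ => ((Real.sqrt N)⁻¹ : ℂ))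
    (hground : H0 *ᵥ ψ0 = 0) :
    ∀ (p : ℕ) (β γ : Fin p → ℝ),
      (∑ z, ‖qaoaState H0 H1 p β γ ψ0 z‖ ^ 2 = 1) ∧
        1 - (∑ j, |γ j|) * Real.sqrt ((S.card : ℝ) * ((N : ℝ) - S.card)) / N ≤
          ‖star ψ0 ⬝ᵥ qaoaState H0 H1 p β γ ψ0‖ ^ 2 := by
  have hH1herm : H1.IsHermitian := by
    rw [hH1]
    show _ᴴ = _
    rw [Matrix.diagonal_conjTranspose]
    refine congrArg Matrix.diagonal ?_
    funext z
    by_cases hz : z ∈ S <;> simp [hz]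
  have hψ0norm : ∑ z, ‖ψ0 z‖ ^ 2 = 1 := by
    rw [hψ0]
    simp only [Finset.sum_const, Finset.card_univ, Fintype.card_fin, nsmul_eq_mul]
    rw [abs_c_sq hN]
    field_simp
  have hdotself : star ψ0 ⬝ᵥ ψ0 = 1 := by
    have h := ofReal_sum_sq_abs ψ0
    rw [hψ0norm] at h
    rw [← h]
    norm_num
  intro p
  induction p with
  | zero =>
    intro β γ
    have h0 : qaoaState H0 H1 0 β γ ψ0 = ψ0 := by
      simp [qaoaState, Matrix.one_mulVec]
    rw [h0]
    constructor
    · exact hψ0norm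
    · rw [hdotself]
      simp
  | succ p ih =>
    intro β γ
    obtain ⟨ih1, ih2⟩ := ih (β ∘ Fin.castSucc) (γ ∘ Fin.castSucc)
    set ψ : Fin N → ℂ := qaoaState H0 H1 p (β ∘ Fin.castSucc) (γ ∘ Fin.castSucc) ψ0 with hψdef
    set bl : ℝ := β (Fin.last p) with hbl
    set gl : ℝ := γ (Fin.last p) with hgl
    set U : Matrix (Fin N) (Fin N) ℂ := NormedSpace.exp ((-(bl : ℂ) * Complex.I) • H0) with hU
    set V : Matrix (Fin N) (Fin N) ℂ := NormedSpace.exp ((-(gl : ℂ) * Complex.I) • H1) with hV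
    have hunfold : qaoaState H0 H1 (p + 1) β γ ψ0 = U *ᵥ (V *ᵥ ψ) := by
      rw [qaoaState, List.ofFn_succ, List.prod_cons, ← Matrix.mulVec_mulVec,
        ← Matrix.mulVec_mulVec]
      simp only [Fin.rev_zero, Fin.rev_succ]
      rfl
    have hUunit : Uᴴ * U = 1 := exp_skew_unitary H0 hH0.1 bl
    have hVunit : Vᴴ * V = 1 := exp_skew_unitary H1 hH1herm gl
    have hnormnew : ∑ z, ‖qaoaState H0 H1 (p + 1) β γ ψ0 z‖ ^ 2 = 1 := by
      rw [hunfold]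
      rw [sum_sq_abs_eq_of_dot_eq (U *ᵥ (V *ᵥ ψ)) ψ ?_]
      · exact ih1
      · rw [dot_self_mulVec U hUunit, dot_self_mulVec V hVunit]
    refine ⟨hnormnew, ?_⟩
    -- overlap with ψ0 is unchanged by U
    have hUψ0 : star ψ0 ᵥ* U = star ψ0 := by
      have h1 : Uᴴ *ᵥ ψ0 = ψ0 := by
        rw [hU, ← Matrix.exp_conjTranspose]
        have harg : ((-(bl : ℂ) * Complex.I) • H0)ᴴ = ((bl : ℂ) * Complex.I) • H0 := by
          rw [Matrix.conjTranspose_smul, hH0.1.eq]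
          congr 1
          simp [Complex.conj_I]
        rw [harg]
        apply exp_mulVec_eq_self
        rw [Matrix.smul_mulVec, hground, smul_zero]
      have h2 : star ψ0 ᵥ* U = star (Uᴴ *ᵥ ψ0) := by
        rw [Matrix.star_mulVec, Matrix.conjTranspose_conjTranspose]
      rw [h2, h1]
    have hovU : star ψ0 ⬝ᵥ (U *ᵥ (V *ᵥ ψ)) = star ψ0 ⬝ᵥ (V *ᵥ ψ) := by
      rw [dotProduct_mulVec, hUψ0]
    -- V is explicit diagonal
    set e : ℂ := Complex.exp (-(gl : ℂ) * Complex.I) with he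
    have hVdiag : V = Matrix.diagonal (fun z => if z ∈ S then (1 : ℂ) else e) := by
      rw [hV, hH1, ← Matrix.diagonal_smul, Matrix.exp_diagonal]
      refine congrArg Matrix.diagonal ?_
      funext z
      rw [Pi.coe_exp]
      by_cases hz : z ∈ S
      · simp only [Pi.smul_apply, hz, if_true, smul_eq_mul, mul_zero]
        rw [← Complex.exp_eq_exp_ℂ, Complex.exp_zero]
      · simp only [Pi.smul_apply, hz, if_false, smul_eq_mul, mul_one]
        rw [← Complex.exp_eq_exp_ℂ]
    have hVψ : V *ᵥ ψ = fun z => (if z ∈ S then (1 : ℂ) else e) * ψ z := by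
      funext z
      rw [hVdiag, Matrix.mulVec_diagonal]
    -- split sums
    set q : ℂ := ∑ z ∈ S, ψ z with hq
    set r : ℂ := ∑ z ∈ Sᶜ, ψ z with hr
    have hovV : star ψ0 ⬝ᵥ (V *ᵥ ψ) = ((Real.sqrt N)⁻¹ : ℂ) * (q + e * r) := by
      rw [uniform_dot hN ψ0 hψ0, hVψ]
      congr 1
      rw [← Finset.sum_add_sum_compl S]
      congr 1
      · rw [hq]
        refine Finset.sum_congr rfl fun z hz => ?_
        rw [if_pos hz, one_mul]
      · rw [hr, Finset.mul_sum]
        refine Finset.sum_congr rfl fun z hz => ?_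
        rw [if_neg (Finset.mem_compl.mp hz)]
    have hovOld : star ψ0 ⬝ᵥ ψ = ((Real.sqrt N)⁻¹ : ℂ) * (q + r) := by
      rw [uniform_dot hN ψ0 hψ0]
      congr 1
      rw [← Finset.sum_add_sum_compl S]
    -- abs-squared via normSq
    have habsc : ∀ X : ℂ, ‖((Real.sqrt N)⁻¹ : ℂ) * X‖ ^ 2 =
        (N : ℝ)⁻¹ * Complex.normSq X := by
      intro X
      rw [norm_mul, mul_pow, abs_c_sq hN, Complex.sq_norm]
    -- Cauchy–Schwarz data
    set u : ℝ := ∑ z ∈ S, ‖ψ z‖ ^ 2 with hu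
    set w : ℝ := ∑ z ∈ Sᶜ, ‖ψ z‖ ^ 2 with hw
    have huw : u + w = 1 := by
      rw [hu, hw, Finset.sum_add_sum_compl]
      exact ih1
    have hunn : 0 ≤ u := Finset.sum_nonneg fun z _ => sq_nonneg _
    have hwnn : 0 ≤ w := Finset.sum_nonneg fun z _ => sq_nonneg _
    have hqb : ‖q‖ ^ 2 ≤ (S.card : ℝ) * u := cauchy_schwarz_subset S ψ
    have hrb : ‖r‖ ^ 2 ≤ (Sᶜ.card : ℝ) * w := cauchy_schwarz_subset Sᶜ ψ
    have hcardcompl : (Sᶜ.card : ℝ) = (N : ℝ) - S.card := by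
      rw [Finset.card_compl, Fintype.card_fin]
      have := S.card_le_univ
      rw [Nat.cast_sub (by simpa using this)]
    rw [hcardcompl] at hrb
    -- e bounds
    have heabs : ‖e‖ = 1 := by
      rw [he, show -(gl : ℂ) * Complex.I = ((-gl : ℝ) : ℂ) * Complex.I by push_cast; ring]
      exact Complex.norm_exp_ofReal_mul_I (-gl)
    have heone : ‖e - 1‖ ≤ |gl| := by
      rw [he, show -(gl : ℂ) * Complex.I = ((-gl : ℝ) : ℂ) * Complex.I by push_cast; ring]
      have := abs_exp_I_sub_one (-gl)
      rwa [abs_neg] at this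
    set K : ℝ := Real.sqrt ((S.card : ℝ) * ((N : ℝ) - S.card)) with hK
    have hKnn : 0 ≤ K := Real.sqrt_nonneg _
    have hstep : Complex.normSq (q + r) - |gl| * K ≤ Complex.normSq (q + e * r) :=
      step_ineq q r e u w (S.card : ℝ) ((N : ℝ) - S.card) K (|gl|)
        heabs heone (abs_nonneg _) hqb hrb hunn hwnn huw (by positivity)
        (by
          have h1 : (S.card : ℝ) ≤ N := by
            have := S.card_le_univ
            simpa using (Nat.cast_le (α := ℝ)).mpr this
          linarith)
        hK
    -- assemble
    have hNinv : (0 : ℝ) ≤ (N : ℝ)⁻¹ := by positivity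
    have hold2 : 1 - (∑ j : Fin p, |γ (Fin.castSucc j)|) * K / N ≤
        (N : ℝ)⁻¹ * Complex.normSq (q + r) := by
      have := ih2
      rwa [hovOld, habsc] at this
    have hsum : (∑ j : Fin (p + 1), |γ j|) =
        (∑ j : Fin p, |γ (Fin.castSucc j)|) + |gl| := by
      rw [Fin.sum_univ_castSucc]
    rw [hunfold, hovU, hovV, habsc]
    have hmul : (N : ℝ)⁻¹ * (Complex.normSq (q + r) - |gl| * K) ≤
        (N : ℝ)⁻¹ * Complex.normSq (q + e * r) :=
      mul_le_mul_of_nonneg_left hstep hNinv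
    have hNne : (N : ℝ) ≠ 0 := by positivity
    have hexp : (N : ℝ)⁻¹ * (Complex.normSq (q + r) - |gl| * K) =
        (N : ℝ)⁻¹ * Complex.normSq (q + r) - |gl| * K / N := by
      field_simp
    rw [hsum]
    have hfin : 1 - ((∑ j : Fin p, |γ (Fin.castSucc j)|) + |gl|) * K / N =
        (1 - (∑ j : Fin p, |γ (Fin.castSucc j)|) * K / N) - |gl| * K / N := by
      ring
    rw [hfin]
    linarith [hmul, hexp ▸ hmul, hold2]

end QaoaMain

/-- search lower bound for QAOA with an arbitrary mixer whose zero-energy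
ground state is the uniform superposition. -/
theorem qaoa_search_lower_bound_general_mixer
    {N : ℕ} (hN : 2 ≤ N) (S : Finset (Fin N))
    (hm1 : 1 ≤ S.card) (hm2 : S.card ≤ N - 1)
    (HC H0 H1 : Matrix (Fin N) (Fin N) ℂ)
    (hHC : HC = Matrix.diagonal fun z => if z ∈ S then (1 : ℂ) else 0)
    (hH1 : H1 = 1 - HC)
    (hH0 : H0.PosSemidef)
    (ψ0 : Fin N → ℂ) (hψ0 : ψ0 = fun _ => ((Real.sqrt N)⁻¹ : ℂ))
    (hground : H0 *ᵥ ψ0 = 0)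
    (p : ℕ) (hp : 1 ≤ p) (β γ : Fin p → ℝ)
    (hγ : ∀ j, |γ j| ≤ 2 * Real.pi)
    (ψp : Fin N → ℂ) (hψp : ψp = qaoaState H0 H1 p β γ ψ0)
    (lam : ℝ) (hlam : lam = ∑ z ∈ S, ‖ψp z‖ ^ 2) :
    (p : ℝ) * (2 * Real.pi) * Real.sqrt (S.card * ((N : ℝ) - S.card)) ≥
      lam * ((N : ℝ) - 2 * S.card) + S.card
        - 2 * Real.sqrt (lam * (1 - lam) * S.card * ((N : ℝ) - S.card)) := by
  have hN0 : 0 < N := by omega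
  have hNR : (0 : ℝ) < N := by exact_mod_cast hN0
  have hmR : (1 : ℝ) ≤ (S.card : ℝ) := by exact_mod_cast hm1
  have hmN : (S.card : ℝ) ≤ (N : ℝ) - 1 := by
    have h2 : (S.card : ℝ) ≤ ((N - 1 : ℕ) : ℝ) := Nat.cast_le.mpr hm2
    rwa [Nat.cast_sub (by omega), Nat.cast_one] at h2
  have hH1' : H1 = Matrix.diagonal (fun z => if z ∈ S then (0 : ℂ) else 1) := by
    rw [hH1, hHC, ← Matrix.diagonal_one, Matrix.diagonal_sub]
    refine congrArg Matrix.diagonal ?_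
    funext z
    by_cases hz : z ∈ S <;> simp [hz]
  obtain ⟨h1, h2⟩ := qaoa_induction hN0 S H0 H1 hH0 hH1' ψ0 hψ0 hground p β γ
  rw [← hψp] at h1 h2
  -- facts about lam
  have hlam0 : 0 ≤ lam := by
    rw [hlam]; exact Finset.sum_nonneg fun z _ => sq_nonneg _
  have hsplitnorm : lam + ∑ z ∈ Sᶜ, ‖ψp z‖ ^ 2 = 1 := by
    rw [hlam, Finset.sum_add_sum_compl]; exact h1
  have hcompl : ∑ z ∈ Sᶜ, ‖ψp z‖ ^ 2 = 1 - lam := by linarith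
  have hlam1 : lam ≤ 1 := by
    have : 0 ≤ ∑ z ∈ Sᶜ, ‖ψp z‖ ^ 2 :=
      Finset.sum_nonneg fun z _ => sq_nonneg _
    linarith
  -- phase-angle sum bound
  have hγsum : (∑ j, |γ j|) ≤ (p : ℝ) * (2 * Real.pi) := by
    have := Finset.sum_le_card_nsmul Finset.univ (fun j => |γ j|) (2 * Real.pi)
      (fun j _ => hγ j)
    simpa [Finset.card_univ, nsmul_eq_mul] using this
  set K : ℝ := Real.sqrt ((S.card : ℝ) * ((N : ℝ) - S.card)) with hK
  have hK0 : 0 ≤ K := Real.sqrt_nonneg _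
  have hlow : 1 - (p : ℝ) * (2 * Real.pi) * K / N ≤ ‖star ψ0 ⬝ᵥ ψp‖ ^ 2 := by
    refine le_trans ?_ h2
    have : (∑ j, |γ j|) * K / N ≤ (p : ℝ) * (2 * Real.pi) * K / N := by
      gcongr
    linarith
  -- upper bound on the overlap (Cauchy–Schwarz)
  set q : ℂ := ∑ z ∈ S, ψp z with hqdef
  set r : ℂ := ∑ z ∈ Sᶜ, ψp z with hrdef
  have hov : star ψ0 ⬝ᵥ ψp = (((Real.sqrt N : ℝ)) : ℂ)⁻¹ * (q + r) := by
    rw [uniform_dot hN0 ψ0 hψ0, ← Finset.sum_add_sum_compl S]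
  set a : ℝ := Real.sqrt ((S.card : ℝ) * lam) with ha
  set b : ℝ := Real.sqrt (((N : ℝ) - S.card) * (1 - lam)) with hb
  have ha0 : 0 ≤ a := Real.sqrt_nonneg _
  have hb0 : 0 ≤ b := Real.sqrt_nonneg _
  have hqa : ‖q‖ ≤ a := by
    have h := cauchy_schwarz_subset S ψp
    rw [← hlam] at h
    have h' : Real.sqrt (‖q‖ ^ 2) ≤ a := by
      rw [ha]; exact Real.sqrt_le_sqrt h
    rwa [Real.sqrt_sq (norm_nonneg _)] at h'
  have hrb : ‖r‖ ≤ b := by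
    have h := cauchy_schwarz_subset Sᶜ ψp
    rw [hcompl] at h
    have hcard : (Sᶜ.card : ℝ) = (N : ℝ) - S.card := by
      rw [Finset.card_compl, Fintype.card_fin,
        Nat.cast_sub (by simpa using S.card_le_univ)]
    rw [hcard] at h
    have h' : Real.sqrt (‖r‖ ^ 2) ≤ b := by
      rw [hb]; exact Real.sqrt_le_sqrt h
    rwa [Real.sqrt_sq (norm_nonneg _)] at h'
  have hub : ‖star ψ0 ⬝ᵥ ψp‖ ^ 2 ≤ (N : ℝ)⁻¹ * (a + b) ^ 2 := by
    rw [hov, norm_mul, mul_pow, abs_c_sq hN0]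
    have habsqr : ‖q + r‖ ≤ a + b :=
      le_trans (norm_add_le q r) (add_le_add hqa hrb)
    have : ‖q + r‖ ^ 2 ≤ (a + b) ^ 2 :=
      pow_le_pow_left₀ (norm_nonneg _) habsqr 2
    have hNinv : (0 : ℝ) ≤ (N : ℝ)⁻¹ := by positivity
    exact mul_le_mul_of_nonneg_left this hNinv
  -- combine
  have hcomb : 1 - (p : ℝ) * (2 * Real.pi) * K / N ≤ (N : ℝ)⁻¹ * (a + b) ^ 2 :=
    le_trans hlow hub
  have hmul := mul_le_mul_of_nonneg_left hcomb (le_of_lt hNR)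
  have hNne : (N : ℝ) ≠ 0 := ne_of_gt hNR
  have hleft : (N : ℝ) * (1 - (p : ℝ) * (2 * Real.pi) * K / N) =
      (N : ℝ) - (p : ℝ) * (2 * Real.pi) * K := by
    field_simp
  have hright : (N : ℝ) * ((N : ℝ)⁻¹ * (a + b) ^ 2) = (a + b) ^ 2 := by
    field_simp
  rw [hleft, hright] at hmul
  -- expand (a + b)^2
  have hmlam : (0 : ℝ) ≤ (S.card : ℝ) * lam := mul_nonneg (by linarith) hlam0
  have hnmlam : (0 : ℝ) ≤ ((N : ℝ) - S.card) * (1 - lam) :=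
    mul_nonneg (by linarith) (by linarith)
  have ha2 : a ^ 2 = (S.card : ℝ) * lam := by
    rw [ha, Real.sq_sqrt hmlam]
  have hb2 : b ^ 2 = ((N : ℝ) - S.card) * (1 - lam) := by
    rw [hb, Real.sq_sqrt hnmlam]
  have hab : a * b = Real.sqrt (lam * (1 - lam) * S.card * ((N : ℝ) - S.card)) := by
    rw [ha, hb, ← Real.sqrt_mul hmlam]
    congr 1
    ring
  have hexpand : (a + b) ^ 2 = a ^ 2 + b ^ 2 + 2 * (a * b) := by ring
  rw [hexpand, ha2, hb2, hab] at hmul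
  -- final algebra
  have hid : (N : ℝ) - (S.card : ℝ) * lam - ((N : ℝ) - S.card) * (1 - lam) =
      lam * ((N : ℝ) - 2 * S.card) + S.card := by ring
  linarith
end

section
/- Let n and k be integers with 0 < k < n/2. Let V = { z : Fin n → ZMod 2 | the Hamming weight of z lies in {k−1, k, k+1} }, and let M be the real matrix indexed by V × V with M(z, w) = 1 if the Hamming distance between z and w equals 1 and M(z, w) = 0 otherwise (the adjacency matrix of the subgraph of the n-dimensional hypercube Q_n induced by the vertices of Hamming weight k−1, k, and k+1). Then ‖M‖ = √(2k(n − k) + n); equivalently, the spectral radius of this induced subgraph equals √(2k(n − k) + n). -/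
open Matrix Finset

section Aux

lemma perron_bound {ι : Type*} [Fintype ι] (A : ι → ι → ℝ) (v : ι → ℝ) (lam : ℝ)
    (hA : ∀ i j, 0 ≤ A i j) (hsym : ∀ i j, A i j = A j i)
    (hv : ∀ i, 0 < v i) (heig : ∀ i, ∑ j, A i j * v j = lam * v i)
    (x : ι → ℝ) : ∑ i, (∑ j, A i j * x j) ^ 2 ≤ lam ^ 2 * ∑ i, x i ^ 2 := by
  have key : ∀ i, (∑ j, A i j * x j) ^ 2 ≤ (lam * v i) * ∑ j, A i j * (x j ^ 2 / v j) := by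
    intro i
    have h1 : ∀ j, A i j * x j = Real.sqrt (A i j * v j) * (Real.sqrt (A i j / v j) * x j) := by
      intro j
      rw [← mul_assoc, ← Real.sqrt_mul (mul_nonneg (hA i j) (hv j).le)]
      have h2 : A i j * v j * (A i j / v j) = A i j ^ 2 := by
        field_simp
        rw [div_eq_iff (hv j).ne']
      rw [h2, Real.sqrt_sq (hA i j)]
    calc (∑ j, A i j * x j) ^ 2
        = (∑ j, Real.sqrt (A i j * v j) * (Real.sqrt (A i j / v j) * x j)) ^ 2 := by
          simp_rw [h1]
      _ ≤ (∑ j, Real.sqrt (A i j * v j) ^ 2) * ∑ j, (Real.sqrt (A i j / v j) * x j) ^ 2 :=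
          Finset.sum_mul_sq_le_sq_mul_sq _ _ _
      _ = (lam * v i) * ∑ j, A i j * (x j ^ 2 / v j) := by
          rw [← heig i]
          congr 1
          · exact Finset.sum_congr rfl fun j _ =>
              Real.sq_sqrt (mul_nonneg (hA i j) (hv j).le)
          · refine Finset.sum_congr rfl fun j _ => ?_
            rw [mul_pow, Real.sq_sqrt (div_nonneg (hA i j) (hv j).le)]
            ring
  calc ∑ i, (∑ j, A i j * x j) ^ 2 ≤ ∑ i, (lam * v i) * ∑ j, A i j * (x j ^ 2 / v j) :=
        Finset.sum_le_sum fun i _ => key i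
    _ = ∑ j, (lam * (x j ^ 2 / v j)) * ∑ i, A j i * v i := by
        simp_rw [Finset.mul_sum]
        rw [Finset.sum_comm]
        refine Finset.sum_congr rfl fun j _ => Finset.sum_congr rfl fun i _ => ?_
        rw [hsym j i]; ring
    _ = lam ^ 2 * ∑ i, x i ^ 2 := by
        rw [Finset.mul_sum]
        refine Finset.sum_congr rfl fun j _ => ?_
        rw [heig j]
        field_simp
        rw [div_eq_iff (hv j).ne']

lemma zmod2_ne_iff' : ∀ a b : ZMod 2, a ≠ b ↔ a = b + 1 := by decide

lemma zmod2_ne_iff {a b : ZMod 2} : a ≠ b ↔ a = b + 1 := zmod2_ne_iff' a b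

lemma zmod2_self_add_one' : ∀ a : ZMod 2, a ≠ a + 1 := by decide

lemma zmod2_self_add_one {a : ZMod 2} : a ≠ a + 1 := zmod2_self_add_one' a

lemma hammingNorm_def {n : ℕ} (z : Fin n → ZMod 2) :
    hammingNorm z = (univ.filter fun j => z j ≠ 0).card := rfl

lemma hammingDist_def {n : ℕ} (z w : Fin n → ZMod 2) :
    hammingDist z w = (univ.filter fun j => z j ≠ w j).card := rfl

lemma flip_norm_one {n : ℕ} (z : Fin n → ZMod 2) (i : Fin n) (h : z i = 1) :
    hammingNorm z = hammingNorm (Function.update z i (z i + 1)) + 1 := by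
  have h0 : z i + 1 = 0 := by rw [h]; decide
  rw [hammingNorm_def, hammingNorm_def, h0]
  have hset : (univ.filter fun j => Function.update z i 0 j ≠ 0)
      = (univ.filter fun j => z j ≠ 0).erase i := by
    ext j
    rcases eq_or_ne j i with rfl | hj
    · simp [Function.update_self]
    · simp [Function.update_of_ne hj, hj]
  have hmem : i ∈ (univ.filter fun j => z j ≠ 0) := by simp [h]
  rw [hset, Finset.card_erase_of_mem hmem]
  have hpos : 0 < (univ.filter fun j => z j ≠ 0).card := Finset.card_pos.2 ⟨i, hmem⟩
  omega

lemma flip_norm_zero {n : ℕ} (z : Fin n → ZMod 2) (i : Fin n) (h : z i = 0) :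
    hammingNorm (Function.update z i (z i + 1)) = hammingNorm z + 1 := by
  have h0 : z i + 1 = 1 := by rw [h]; decide
  rw [hammingNorm_def, hammingNorm_def, h0]
  have hset : (univ.filter fun j => Function.update z i 1 j ≠ 0)
      = insert i (univ.filter fun j => z j ≠ 0) := by
    ext j
    rcases eq_or_ne j i with rfl | hj
    · simp [Function.update_self]
    · simp [Function.update_of_ne hj, hj]
  rw [hset, Finset.card_insert_of_notMem (by simp [h])]

lemma flip_sum {n : ℕ} (z : Fin n → ZMod 2) (f : (Fin n → ZMod 2) → ℝ) :
    ∑ w, (if hammingDist z w = 1 then f w else 0)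
      = ∑ i : Fin n, f (Function.update z i (z i + 1)) := by
  rw [← Finset.sum_filter]
  have himg : (univ.filter fun w => hammingDist z w = 1)
      = Finset.univ.image (fun i => Function.update z i (z i + 1)) := by
    ext w
    simp only [Finset.mem_filter, Finset.mem_image, Finset.mem_univ, true_and]
    constructor
    · intro hw
      rw [hammingDist_def] at hw
      obtain ⟨i, hi⟩ := Finset.card_eq_one.1 hw
      refine ⟨i, funext fun j => ?_⟩
      rcases eq_or_ne j i with rfl | hj
      · rw [Function.update_self]
        have hji : j ∈ (univ.filter fun j => z j ≠ w j) := by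
          rw [hi]; exact Finset.mem_singleton_self j
        rw [Finset.mem_filter] at hji
        exact (zmod2_ne_iff.1 (Ne.symm hji.2)).symm
      · rw [Function.update_of_ne hj]
        by_contra hne
        have hji : j ∈ (univ.filter fun j => z j ≠ w j) := by
          rw [Finset.mem_filter]
          exact ⟨Finset.mem_univ j, hne⟩
        rw [hi, Finset.mem_singleton] at hji
        exact hj hji
    · rintro ⟨i, rfl⟩
      rw [hammingDist_def]
      have hset : (univ.filter fun j => z j ≠ Function.update z i (z i + 1) j) = {i} := by
        ext j
        rcases eq_or_ne j i with rfl | hj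
        · simp [Function.update_self, zmod2_self_add_one]
        · simp [Function.update_of_ne hj, hj]
      rw [hset, Finset.card_singleton]
  rw [himg, Finset.sum_image]
  intro i _ j _ hij
  by_contra hne
  have h1 := congrFun hij i
  beta_reduce at h1
  rw [Function.update_self, Function.update_of_ne hne] at h1
  exact zmod2_self_add_one h1.symm

lemma zmod2_not_one {a : ZMod 2} (h : ¬ a = 1) : a = 0 := by revert a h; decide

lemma count_ones {n : ℕ} (z : Fin n → ZMod 2) :
    (univ.filter fun i => z i = 1).card = hammingNorm z := by
  rw [hammingNorm_def]
  congr 1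
  ext i
  have : ∀ a : ZMod 2, a = 1 ↔ a ≠ 0 := by decide
  simp [this]

lemma count_zeros {n : ℕ} (z : Fin n → ZMod 2) :
    (univ.filter fun i => ¬ z i = 1).card = n - hammingNorm z := by
  have h := Finset.card_filter_add_card_filter_not (s := univ)
    (p := fun i : Fin n => z i = 1)
  rw [count_ones] at h
  simp only [Finset.card_univ, Fintype.card_fin] at h
  omega

lemma neighbor_sum {n : ℕ} (z : Fin n → ZMod 2) (g : ℕ → ℝ) :
    ∑ w, (if hammingDist z w = 1 then g (hammingNorm w) else 0)
      = (hammingNorm z : ℝ) * g (hammingNorm z - 1)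
        + ((n - hammingNorm z : ℕ) : ℝ) * g (hammingNorm z + 1) := by
  rw [flip_sum z (fun w => g (hammingNorm w))]
  rw [← Finset.sum_filter_add_sum_filter_not univ (fun i => z i = 1)]
  congr 1
  · rw [Finset.sum_congr rfl (fun i hi => ?_), Finset.sum_const, count_ones,
      nsmul_eq_mul]
    rw [Finset.mem_filter] at hi
    have := flip_norm_one z i hi.2
    congr 1
    omega
  · rw [Finset.sum_congr rfl (fun i hi => ?_), Finset.sum_const, count_zeros,
      nsmul_eq_mul]
    rw [Finset.mem_filter] at hi
    rw [flip_norm_zero z i (zmod2_not_one hi.2)]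

lemma card_lt_filter (n k : ℕ) (hkn : k ≤ n) :
    (univ.filter fun i : Fin n => (i:ℕ) < k).card = k := by
  have h : (univ.filter fun i : Fin n => (i:ℕ) < k)
      = Finset.map (Fin.castLEEmb hkn) univ := by
    ext i
    simp only [Finset.mem_filter, Finset.mem_univ, true_and, Finset.mem_map]
    constructor
    · intro h
      exact ⟨⟨i, h⟩, by simp [Fin.castLEEmb, Fin.castLE]⟩
    · rintro ⟨j, rfl⟩
      simp
  rw [h, Finset.card_map, Finset.card_univ, Fintype.card_fin]

end Aux

/-- the spectral radius of the subgraph of the hypercube `Q_n` induced by the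
vertices of Hamming weight `k-1`, `k`, `k+1` equals `√(2k(n-k)+n)`. -/
theorem specNorm_hypercube_three_layers
    (n k : ℕ) (hk : 0 < k) (hkn : 2 * k < n)
    (M : Matrix {z : Fin n → ZMod 2 //
        hammingNorm z = k - 1 ∨ hammingNorm z = k ∨ hammingNorm z = k + 1}
      {z : Fin n → ZMod 2 //
        hammingNorm z = k - 1 ∨ hammingNorm z = k ∨ hammingNorm z = k + 1} ℝ)
    (hM : M = Matrix.of fun z w => if hammingDist z.1 w.1 = 1 then (1 : ℝ) else 0) :
    specNorm M = Real.sqrt (2 * (k : ℝ) * ((n : ℝ) - k) + n) := by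
  set lam : ℝ := Real.sqrt (2 * (k : ℝ) * ((n : ℝ) - k) + n) with hlam
  have hkn' : k < n := by omega
  have hkn1 : k + 1 ≤ n := by omega
  have hknR : (k : ℝ) < n := by exact_mod_cast hkn'
  have hval : (0:ℝ) < 2 * (k : ℝ) * ((n : ℝ) - k) + n := by
    have h0 : (0:ℝ) < n := by
      have : 0 < n := by omega
      exact_mod_cast this
    have h1 : (0:ℝ) ≤ k := by positivity
    nlinarith
  have hlampos : 0 < lam := Real.sqrt_pos.2 hval
  have hlamsq : lam * lam = 2 * (k : ℝ) * ((n : ℝ) - k) + n := Real.mul_self_sqrt hval.le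
  set g : ℕ → ℝ := fun m => if m = k - 1 then ((n:ℝ) - k + 1) else if m = k then lam
    else if m = k + 1 then ((k:ℝ) + 1) else 0 with hg
  have hg1 : g (k-1) = (n:ℝ) - k + 1 := by simp [hg]
  have hg2 : g k = lam := by
    have h : ¬ (k = k - 1) := by omega
    simp [hg, h]
  have hg3 : g (k+1) = (k:ℝ) + 1 := by
    have h1 : ¬ (k + 1 = k - 1) := by omega
    have h2 : ¬ (k + 1 = k) := by omega
    simp [hg, h1, h2]
  have hg0 : ∀ m, ¬ (m = k - 1 ∨ m = k ∨ m = k + 1) → g m = 0 := by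
    intro m hm
    push_neg at hm
    simp [hg, hm.1, hm.2.1, hm.2.2]
  have hcast1 : ((n - (k-1) : ℕ) : ℝ) = (n:ℝ) - k + 1 := by
    have h : n - (k-1) = n - k + 1 := by omega
    rw [h]
    push_cast [Nat.cast_sub hkn'.le]
    ring
  have hcast2 : ((n - k : ℕ) : ℝ) = (n:ℝ) - k := by
    rw [Nat.cast_sub hkn'.le]
  -- the eigenvector equation over the whole cube
  have heigfull : ∀ z : Fin n → ZMod 2,
      (hammingNorm z = k - 1 ∨ hammingNorm z = k ∨ hammingNorm z = k + 1) →
      ∑ w, (if hammingDist z w = 1 then g (hammingNorm w) else 0)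
        = lam * g (hammingNorm z) := by
    intro z hz
    rw [neighbor_sum]
    rcases hz with h | h | h <;> rw [h]
    · have hc : ((k-1:ℕ):ℝ) * g (k-1-1) = 0 := by
        rcases Nat.lt_or_ge k 2 with h2 | h2
        · have hk0 : k - 1 = 0 := by omega
          rw [hk0]
          simp
        · rw [hg0 (k-1-1) (by omega)]
          ring
      have hstep : k - 1 + 1 = k := by omega
      rw [hc, hstep, hg1, hg2, hcast1]
      ring
    · rw [hg1, hg2, hg3, hcast2, hlamsq]
      ring
    · have hstep : k + 1 - 1 = k := by omega
      rw [hstep, hg2, hg3, hg0 (k+1+1) (by omega)]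
      push_cast
      ring
  -- transfer to the subtype
  have heig : ∀ z : {z : Fin n → ZMod 2 //
      hammingNorm z = k - 1 ∨ hammingNorm z = k ∨ hammingNorm z = k + 1},
      ∑ w : {z : Fin n → ZMod 2 //
        hammingNorm z = k - 1 ∨ hammingNorm z = k ∨ hammingNorm z = k + 1},
        (if hammingDist z.1 w.1 = 1 then (1:ℝ) else 0) * g (hammingNorm w.1)
        = lam * g (hammingNorm z.1) := by
    intro z
    have hrw : ∀ w : {z : Fin n → ZMod 2 //
        hammingNorm z = k - 1 ∨ hammingNorm z = k ∨ hammingNorm z = k + 1},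
        (if hammingDist z.1 w.1 = 1 then (1:ℝ) else 0) * g (hammingNorm w.1)
          = if hammingDist z.1 w.1 = 1 then g (hammingNorm w.1) else 0 := by
      intro w
      split <;> simp
    rw [Finset.sum_congr rfl (fun w _ => hrw w)]
    rw [← heigfull z.1 z.2]
    have hconv := Finset.sum_subtype
      (p := fun z : Fin n → ZMod 2 =>
        hammingNorm z = k - 1 ∨ hammingNorm z = k ∨ hammingNorm z = k + 1)
      (M := ℝ)
      (F := by infer_instance)
      (univ.filter fun z : Fin n → ZMod 2 =>
        hammingNorm z = k - 1 ∨ hammingNorm z = k ∨ hammingNorm z = k + 1)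
      (fun x => by simp)
      (fun w => if hammingDist z.1 w = 1 then g (hammingNorm w) else 0)
    rw [← hconv]
    refine Finset.sum_subset (Finset.filter_subset _ _) ?_
    intro w _ hw
    rw [Finset.mem_filter] at hw
    have hgw : g (hammingNorm w) = 0 := hg0 _ (fun hc => hw ⟨Finset.mem_univ w, hc⟩)
    rw [hgw]
    simp
  -- positive eigenvector
  set v : {z : Fin n → ZMod 2 //
      hammingNorm z = k - 1 ∨ hammingNorm z = k ∨ hammingNorm z = k + 1} → ℝ :=
    fun z => g (hammingNorm z.1) with hv
  have hvpos : ∀ z, 0 < v z := by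
    rintro ⟨z, h | h | h⟩ <;> simp only [hv] <;> rw [h]
    · rw [hg1]; linarith
    · rw [hg2]; exact hlampos
    · rw [hg3]; positivity
  -- the matrix entries
  have hMe : ∀ i j, M i j = if hammingDist i.1 j.1 = 1 then (1:ℝ) else 0 := by
    intro i j
    rw [hM]
    rfl
  have hApos : ∀ i j, 0 ≤ M i j := by
    intro i j
    rw [hMe]
    split <;> norm_num
  have hAsym : ∀ i j, M i j = M j i := by
    intro i j
    rw [hMe, hMe, hammingDist_comm]
  have heigM : ∀ i, ∑ j, M i j * v j = lam * v i := by
    intro i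
    simp only [hMe, hv]
    exact heig i
  -- a vertex of weight k
  have hz0 : hammingNorm (fun i : Fin n => if (i:ℕ) < k then (1 : ZMod 2) else 0) = k := by
    rw [hammingNorm_def]
    have hset : (univ.filter fun i : Fin n =>
        (fun i : Fin n => if (i:ℕ) < k then (1 : ZMod 2) else 0) i ≠ 0)
        = univ.filter fun i : Fin n => (i:ℕ) < k := by
      ext i
      by_cases h : (i:ℕ) < k <;> simp [h]
    rw [hset, card_lt_filter n k hkn'.le]
  have happ : ∀ x : EuclideanSpace ℝ {z : Fin n → ZMod 2 //
      hammingNorm z = k - 1 ∨ hammingNorm z = k ∨ hammingNorm z = k + 1},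
      ∀ i, (toEuclideanCLM (𝕜 := ℝ) M) x i = ∑ j, M i j * x j := by
    intro x i
    have h := congrFun (Matrix.ofLp_toEuclideanCLM (𝕜 := ℝ) M x) i
    simpa [Matrix.toLin'_apply, Matrix.mulVec, dotProduct] using h
  have hub : ‖toEuclideanCLM (𝕜 := ℝ) M‖ ≤ lam := by
    refine ContinuousLinearMap.opNorm_le_bound _ hlampos.le fun x => ?_
    rw [EuclideanSpace.norm_eq, EuclideanSpace.norm_eq]
    have h1 : ∑ i, ‖(toEuclideanCLM (𝕜 := ℝ) M) x i‖ ^ 2 = ∑ i, (∑ j, M i j * x j) ^ 2 :=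
      Finset.sum_congr rfl fun i _ => by rw [happ x i, Real.norm_eq_abs, sq_abs]
    rw [h1]
    have h2 := perron_bound (fun i j => M i j) v lam hApos hAsym hvpos heigM (fun j => x j)
    calc Real.sqrt (∑ i, (∑ j, M i j * x j) ^ 2)
        ≤ Real.sqrt (lam ^ 2 * ∑ i, x i ^ 2) := Real.sqrt_le_sqrt h2
      _ = lam * Real.sqrt (∑ i, ‖x i‖ ^ 2) := by
          rw [Real.sqrt_mul (sq_nonneg lam), Real.sqrt_sq hlampos.le]
          have h3 : ∑ i, x i ^ 2 = ∑ i, ‖x i‖ ^ 2 :=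
            Finset.sum_congr rfl fun i _ => by rw [Real.norm_eq_abs, sq_abs]
          rw [h3]
  have hlb : lam ≤ ‖toEuclideanCLM (𝕜 := ℝ) M‖ := by
    set xv : EuclideanSpace ℝ {z : Fin n → ZMod 2 //
        hammingNorm z = k - 1 ∨ hammingNorm z = k ∨ hammingNorm z = k + 1} :=
      (WithLp.equiv 2 _).symm v with hxv
    have hMxv : (toEuclideanCLM (𝕜 := ℝ) M) xv = lam • xv := by
      ext i
      rw [happ xv i]
      exact heigM i
    have hnorm : ‖(toEuclideanCLM (𝕜 := ℝ) M) xv‖ = lam * ‖xv‖ := by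
      rw [hMxv, norm_smul, Real.norm_of_nonneg hlampos.le]
    have hle := (toEuclideanCLM (𝕜 := ℝ) M).le_opNorm xv
    rw [hnorm] at hle
    have hxvpos : 0 < ‖xv‖ := by
      rw [norm_pos_iff]
      intro h0
      have h1 : v = 0 := by
        have h2 := congrArg (WithLp.equiv 2 _) h0
        simpa [hxv] using h2
      have h3 := congrFun h1 ⟨fun i : Fin n => if (i:ℕ) < k then (1 : ZMod 2) else 0,
        Or.inr (Or.inl hz0)⟩
      exact absurd h3 (hvpos _).ne'
    exact le_of_mul_le_mul_right hle hxvpos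
  simp only [specNorm]
  exact le_antisymm hub hlb
end
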